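/- arXiv:2201.03631 — 3 statements merged into one kernel-verified Lean document; each statement's English description precedes it below -/
import Mathlib

section
/- If b_F ∈ bddᵘ(a_E), then there is an ultraimaginary c_G ∈ bddᵘ(a_E) of arity at most |a|+|T| such that b_F and c_G are interdefinable over ∅ (i.e., Aut(𝕄/b_F) = Aut(𝕄/c_G)). Furthermore, c can be taken to be an enumeration of any small model of cardinality at most |a|+|T| containing a. -/
open FirstOrder Cardinal

universe u v w

namespace BddUltra

variable (L : FirstOrder.Language.{u, u}) (M : Type u) [L.Structure M]

/-- The automorphism group of `M` (composition as multiplication). -/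
instance : Group (M ≃[L] M) where
  mul f g := f.comp g
  one := Language.Equiv.refl L M
  inv := Language.Equiv.symm
  mul_assoc f g h := by ext x; rfl
  one_mul f := by ext x; rfl
  mul_one f := by ext x; rfl
  inv_mul_cancel f := by ext x; exact f.toEquiv.symm_apply_apply x

/-- The cardinality `|T|` of the theory: the cardinality of the language plus `ℵ₀`. -/
def cardT : Cardinal.{u} := L.card + ℵ₀

/-- Two tuples realize the same complete type over `∅`. -/
def SameType {α : Type v} (a b : α → M) : Prop :=
  ∀ φ : L.Formula α, φ.Realize a ↔ φ.Realize b

/-- Two tuples realize the same complete type over the set `A ⊆ M` of parameters. -/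
def SameTypeOver (A : Set M) {α : Type v} (a b : α → M) : Prop :=
  ∀ φ : L.Formula (↥A ⊕ α),
    φ.Realize (Sum.elim (Subtype.val : ↥A → M) a) ↔
      φ.Realize (Sum.elim (Subtype.val : ↥A → M) b)

theorem SameType.comp {α : Type v} {γ : Type w} {a b : α → M} (h : SameType L M a b)
    (g : γ → α) : SameType L M (a ∘ g) (b ∘ g) := by
  intro φ
  have := h (φ.relabel g)
  rwa [Language.Formula.realize_relabel, Language.Formula.realize_relabel] at this

/-- An invariant equivalence relation of arity `α` on `α`-tuples from `M`. -/
structure IER (α : Type u) : Type u where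
  rel : (α → M) → (α → M) → Prop
  equiv : Equivalence rel
  invariant : ∀ a b c d : α → M,
    SameType L M (Sum.elim a b) (Sum.elim c d) → (rel a b ↔ rel c d)

def IER.setoid {α : Type u} (E : IER L M α) : Setoid (α → M) := ⟨E.rel, E.equiv⟩

/-- The pair (juxtaposition) of two invariant equivalence relations. -/
def IER.prod {α β : Type u} (E : IER L M α) (F : IER L M β) : IER L M (α ⊕ β) where
  rel x y := E.rel (x ∘ Sum.inl) (y ∘ Sum.inl) ∧ F.rel (x ∘ Sum.inr) (y ∘ Sum.inr)
  equiv := ⟨fun _ => ⟨E.equiv.refl _, F.equiv.refl _⟩,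
    fun h => ⟨E.equiv.symm h.1, F.equiv.symm h.2⟩,
    fun h h' => ⟨E.equiv.trans h.1 h'.1, F.equiv.trans h.2 h'.2⟩⟩
  invariant := by
    intro a b c d h
    have e1 : ∀ (x : α ⊕ β → M) (y : α ⊕ β → M),
        (Sum.elim x y) ∘ (Sum.map Sum.inl Sum.inl : α ⊕ α → (α ⊕ β) ⊕ (α ⊕ β))
          = Sum.elim (x ∘ Sum.inl) (y ∘ Sum.inl) := by
      intro x y; funext i; cases i <;> rfl
    have e2 : ∀ (x : α ⊕ β → M) (y : α ⊕ β → M),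
        (Sum.elim x y) ∘ (Sum.map Sum.inr Sum.inr : β ⊕ β → (α ⊕ β) ⊕ (α ⊕ β))
          = Sum.elim (x ∘ Sum.inr) (y ∘ Sum.inr) := by
      intro x y; funext i; cases i <;> rfl
    have h1 := h.comp (L := L) (M := M) (Sum.map Sum.inl Sum.inl)
    have h2 := h.comp (L := L) (M := M) (Sum.map Sum.inr Sum.inr)
    rw [e1, e1] at h1
    rw [e2, e2] at h2
    exact and_congr (E.invariant _ _ _ _ h1) (F.invariant _ _ _ _ h2)

/-- The set of automorphisms fixing the ultraimaginary `a_E`. -/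
def autU {α : Type u} (E : IER L M α) (a : α → M) : Set (M ≃[L] M) :=
  {σ | E.rel a (⇑σ ∘ a)}

/-- The set of automorphisms fixing the set `A` pointwise. -/
def autSet (A : Set M) : Set (M ≃[L] M) := {σ | ∀ x ∈ A, σ x = x}

/-- The set of automorphisms fixing the set `A` and the tuple `u` pointwise. -/
def autSetTup (A : Set M) {γ : Type v} (u : γ → M) : Set (M ≃[L] M) :=
  {σ | (∀ x ∈ A, σ x = x) ∧ ∀ i, σ (u i) = u i}

/-- The ultraimaginary `b_F` is bounded over a parameter set whose pointwise
stabilizer is `X`: the `X`-orbit of `b` meets fewer than `κ` classes of `F`. -/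
def BddU (κ : Cardinal.{u}) (X : Set (M ≃[L] M)) {β : Type u} (F : IER L M β)
    (b : β → M) : Prop :=
  ∃ S : Set (β → M), #S < κ ∧ ∀ σ ∈ X, ∃ s ∈ S, F.rel (⇑σ ∘ b) s

/-- The cardinality of the orbit of the ultraimaginary `b_F` under the set `X`
of automorphisms. -/
def orbitCard (X : Set (M ≃[L] M)) {β : Type u} (F : IER L M β) (b : β → M) :
    Cardinal.{u} :=
  #(Set.range fun σ : X => Quotient.mk F.setoid (⇑σ.1 ∘ b))

/-- `b ⫝ᵇᵘ_A c`, expressed in terms of the pointwise stabilizers `XA`, `XAb`, `XAc` of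
`A`, `Ab` and `Ac`: an ultraimaginary is bounded over `Ab` and over `Ac` iff it is
bounded over `A`. -/
def IndepBU (κ : Cardinal.{u}) (XA XAb XAc : Set (M ≃[L] M)) : Prop :=
  ∀ (δ : Type u) (H : IER L M δ) (d : δ → M),
    (BddU L M κ XAb H d ∧ BddU L M κ XAc H d) ↔ BddU L M κ XA H d

/-- The set of automorphisms fixing an elementary substructure pointwise. -/
def autES (N : L.ElementarySubstructure M) : Set (M ≃[L] M) :=
  autSet L M (N : Set M)

/-- `Autf(𝕄/x)` where `X = Aut(𝕄/x)`: the subgroup generated by all pointwise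
stabilizers of small models that are contained in `X`. -/
def autfGen (κ : Cardinal.{u}) (X : Set (M ≃[L] M)) : Subgroup (M ≃[L] M) :=
  Subgroup.closure {σ | ∃ N : L.ElementarySubstructure M,
    #(N : Set M) < κ ∧ autES L M N ⊆ X ∧ σ ∈ autES L M N}

/-- The group of Lascar strong automorphisms over the set `A ⊆ M`: generated by the
pointwise stabilizers of small models containing `A`. -/
def lascarGrp (κ : Cardinal.{u}) (A : Set M) : Subgroup (M ≃[L] M) :=
  Subgroup.closure {σ | ∃ N : L.ElementarySubstructure M,
    #(N : Set M) < κ ∧ A ⊆ (N : Set M) ∧ σ ∈ autES L M N}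

/-- κ-saturation: every finitely realizable set of formulas over a parameter tuple of
arity `< κ`, in `< κ` many variables, is realized. -/
def Saturated (κ : Cardinal.{u}) : Prop :=
  ∀ (α β : Type u), #α < κ → #β < κ → ∀ (a : α → M) (p : Set (L.Formula (α ⊕ β))),
    (∀ s : Finset (L.Formula (α ⊕ β)), ↑s ⊆ p →
      ∃ b : β → M, ∀ φ ∈ s, φ.Realize (Sum.elim a b)) →
    ∃ b : β → M, ∀ φ ∈ p, φ.Realize (Sum.elim a b)

/-- Strong κ-homogeneity: tuples of arity `< κ` with the same type over `∅` are
conjugate under an automorphism. -/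
def Homog (κ : Cardinal.{u}) : Prop :=
  ∀ (α : Type u) (a b : α → M), #α < κ → SameType L M a b →
    ∃ σ : M ≃[L] M, ∀ i, σ (a i) = b i

/-- `M` is a monster model with bound `κbar`: `κbar` is a sufficiently large
(uncountable, regular, strong limit, above `|T|`) cardinal, and `M` is
`κbar`-saturated and strongly `κbar`-homogeneous. -/
structure Monster (κbar : Cardinal.{u}) : Prop where
  aleph0_lt : ℵ₀ < κbar
  isRegular : κbar.IsRegular
  strongLimit : ∀ ρ : Cardinal.{u}, ρ < κbar → 2 ^ ρ < κbar
  lang_lt : L.card < κbar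
  saturated : Saturated L M κbar
  homog : Homog L M κbar

/-- A hyperimaginary: the class of a countable tuple under a countably
type-definable (over `∅`) equivalence relation. -/
structure Hyp : Type u where
  rep : ℕ → M
  fmls : Set (L.Formula (ℕ ⊕ ℕ))
  countable : fmls.Countable
  equiv : Equivalence fun a b : ℕ → M => ∀ φ ∈ fmls, φ.Realize (Sum.elim a b)

/-- The automorphisms fixing each hyperimaginary in the set `A`. -/
def autHyp (A : Set (Hyp L M)) : Set (M ≃[L] M) :=
  {σ | ∀ h ∈ A, ∀ φ ∈ h.fmls, φ.Realize (Sum.elim h.rep (⇑σ ∘ h.rep))}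

/-- The automorphisms fixing each hyperimaginary in `A` and the tuple `u` pointwise. -/
def autHypTup (A : Set (Hyp L M)) {γ : Type v} (u : γ → M) : Set (M ≃[L] M) :=
  {σ | σ ∈ autHyp L M A ∧ ∀ i, σ (u i) = u i}

/-- Flattening of a finite subsequence of a sequence of tuples into a single tuple. -/
def flatten {ι : Type v} {β : Type w} (f : ι → β → M) {n : ℕ} (s : Fin n → ι) :
    Fin n × β → M := fun p => f (s p.1) p.2

/-- A sequence of tuples is `A`-indiscernible (`A ⊆ M` a set of real parameters). -/
def IndiscOver (A : Set M) {ι : Type v} [Preorder ι] {β : Type w} (f : ι → β → M) : Prop :=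
  ∀ (n : ℕ) (s t : Fin n → ι), StrictMono s → StrictMono t →
    SameTypeOver L M A (flatten M f s) (flatten M f t)

/-- Two sequences have the same Ehrenfeucht–Mostowski type over `A ⊆ M`. -/
def SameEMOver (A : Set M) {ι : Type v} [Preorder ι] {ι' : Type w} [Preorder ι']
    {β : Type u} (f : ι → β → M) (g : ι' → β → M) : Prop :=
  ∀ (n : ℕ) (s : Fin n → ι) (t : Fin n → ι'), StrictMono s → StrictMono t →
    SameTypeOver L M A (flatten M f s) (flatten M g t)

/-- A sequence of tuples is `A`-indiscernible, for `A` a set of hyperimaginaries: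
any two increasing tuples from the sequence are conjugate under `Aut(𝕄/A)`. -/
def IndiscOverHyp (A : Set (Hyp L M)) {ι : Type v} [Preorder ι] {β : Type w}
    (f : ι → β → M) : Prop :=
  ∀ (n : ℕ) (s t : Fin n → ι), StrictMono s → StrictMono t →
    ∃ σ ∈ autHyp L M A, ∀ (i : Fin n) (x : β), σ (f (s i) x) = f (t i) x

/-- Two sequences have the same EM-type over the set `A` of hyperimaginaries. -/
def SameEMOverHyp (A : Set (Hyp L M)) {ι : Type v} [Preorder ι] {ι' : Type w} [Preorder ι']
    {β : Type u} (f : ι → β → M) (g : ι' → β → M) : Prop :=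
  ∀ (n : ℕ) (s : Fin n → ι) (t : Fin n → ι'), StrictMono s → StrictMono t →
    ∃ σ ∈ autHyp L M A, ∀ (i : Fin n) (x : β), σ (f (s i) x) = g (t i) x

/-- A sequence of `β`-tuples from `N`, indexed by an arbitrary small linear order. -/
structure Seq (N : Type u) (β : Type u) : Type (u + 1) where
  idx : Type u
  [ord : LinearOrder idx]
  val : idx → β → N

attribute [instance] Seq.ord

/-- Concatenation `I + J` of sequences. -/
def Seq.concat {N β : Type u} (I J : Seq N β) : Seq N β where
  idx := I.idx ⊕ₗ J.idx
  val := fun x => Sum.elim I.val J.val (ofLex x)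

/-- The sequence `I` flattened into a single tuple. -/
def Seq.flat {N β : Type u} (I : Seq N β) : I.idx × β → N := fun p => I.val p.1 p.2

/-- The image `σ · I` of a sequence under an automorphism. -/
def Seq.map {β : Type u} (σ : M ≃[L] M) (I : Seq M β) : Seq M β where
  idx := I.idx
  ord := I.ord
  val := fun i x => σ (I.val i x)

/-- The sequence `(b_i)_{i < ω}` packaged as a `Seq`. -/
def Seq.ofNat {N β : Type u} (b : ℕ → β → N) : Seq N β where
  idx := ULift.{u} ℕ
  val := fun n => b n.down

/-- `I ∼_A J`: both sequences are infinite and `I + J` or `J + I` is `A`-indiscernible. -/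
def SimSeq (A : Set M) {β : Type u} (I J : Seq M β) : Prop :=
  Infinite I.idx ∧ Infinite J.idx ∧
    (IndiscOver L M A (I.concat J).val ∨ IndiscOver L M A (J.concat I).val)

/-- `I ≈_A J`: the transitive closure of `∼_A`. -/
def ApproxSeq (A : Set M) {β : Type u} : Seq M β → Seq M β → Prop :=
  Relation.TransGen (SimSeq L M A)

/-- `I ∼_A J` for `A` a set of hyperimaginaries. -/
def SimSeqHyp (A : Set (Hyp L M)) {β : Type u} (I J : Seq M β) : Prop :=
  Infinite I.idx ∧ Infinite J.idx ∧
    (IndiscOverHyp L M A (I.concat J).val ∨ IndiscOverHyp L M A (J.concat I).val)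

/-- `I ≈_A J` for `A` a set of hyperimaginaries. -/
def ApproxSeqHyp (A : Set (Hyp L M)) {β : Type u} : Seq M β → Seq M β → Prop :=
  Relation.TransGen (SimSeqHyp L M A)

/-- `u ⫝ᵇᵘ_A v` for tuples `u`, `v` over a set `A ⊆ M` of real parameters. -/
def IndepBUReal (κ : Cardinal.{u}) (A : Set M) {γ : Type v} {δ : Type w}
    (x : γ → M) (y : δ → M) : Prop :=
  IndepBU L M κ (autSet L M A) (autSetTup L M A x) (autSetTup L M A y)

/-- `u ⫝ᵇᵘ_A v` for tuples `u`, `v` over a set `A` of hyperimaginaries. -/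
def IndepBUHyp (κ : Cardinal.{u}) (A : Set (Hyp L M)) {γ : Type v} {δ : Type w}
    (x : γ → M) (y : δ → M) : Prop :=
  IndepBU L M κ (autHyp L M A) (autHypTup L M A x) (autHypTup L M A y)

/-- A total `⫝ᵇᵘ`-Morley sequence over the set `A ⊆ M`. -/
def TotalMorleyReal (κ : Cardinal.{u}) (A : Set M) {β : Type u} (b : ℕ → β → M) : Prop :=
  IndiscOver L M A b ∧
    ∀ I J : Seq M β, #I.idx < κ → #J.idx < κ →
      SameEMOver L M A ((I.concat J).val) b →
        IndepBUReal L M κ A I.flat J.flat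

/-- A total `⫝ᵇᵘ`-Morley sequence over the set `A` of hyperimaginaries. -/
def TotalMorleyHyp (κ : Cardinal.{u}) (A : Set (Hyp L M)) {β : Type u}
    (b : ℕ → β → M) : Prop :=
  IndiscOverHyp L M A b ∧
    ∀ I J : Seq M β, #I.idx < κ → #J.idx < κ →
      SameEMOverHyp L M A ((I.concat J).val) b →
        IndepBUHyp L M κ A I.flat J.flat

/-- `tp(b/Ac)` divides over `A`. -/
def Divides (A : Set M) {β : Type v} {γ : Type w} (b : β → M) (c : γ → M) : Prop :=
  ∃ ci : ℕ → γ → M, ci 0 = c ∧ IndiscOver L M A ci ∧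
    ¬∃ b' : β → M, ∀ (i : ℕ) (φ : L.Formula (↥A ⊕ (β ⊕ γ))),
      φ.Realize (Sum.elim (Subtype.val : ↥A → M) (Sum.elim b c)) →
        φ.Realize (Sum.elim (Subtype.val : ↥A → M) (Sum.elim b' (ci i)))

/-- The partition relation `λ → (β)^{<ω}_γ`. -/
def ArrowRel (lam : Cardinal.{u}) (ot : Ordinal.{u}) (c : Cardinal.{u}) : Prop :=
  ∀ f : Finset lam.ord.ToType → c.ord.ToType,
    ∃ X : Set lam.ord.ToType, Nonempty (↥X ≃o ot.ToType) ∧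
      ∀ s t : Finset lam.ord.ToType, ↑s ⊆ X → ↑t ⊆ X → s.card = t.card → f s = f t

/-- The Lascar strong automorphism group over a set `A` of hyperimaginaries:
generated by pointwise stabilizers of small models fixing every element of `A`. -/
def lascarHypGrp (κ : Cardinal.{u}) (A : Set (Hyp L M)) : Subgroup (M ≃[L] M) :=
  Subgroup.closure {σ | ∃ N : L.ElementarySubstructure M,
    #(N : Set M) < κ ∧ autES L M N ⊆ autHyp L M A ∧ σ ∈ autES L M N}

/-- `b_F ⫝ᵇᵘ_{a_E} c_G` for ultraimaginaries. -/
def IndepU (κ : Cardinal.{u}) {α β γ : Type u} (E : IER L M α) (a : α → M)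
    (F : IER L M β) (b : β → M) (G : IER L M γ) (c : γ → M) : Prop :=
  IndepBU L M κ (autU L M E a) (autU L M E a ∩ autU L M F b)
    (autU L M E a ∩ autU L M G c)

section Aux

open FirstOrder Language Set

variable {L : FirstOrder.Language.{u, u}} {M : Type u} [L.Structure M]

theorem sameType_refl {α : Type v} (x : α → M) : SameType L M x x := fun _ => Iff.rfl

theorem SameType.symm' {α : Type v} {x y : α → M} (h : SameType L M x y) :
    SameType L M y x := fun φ => (h φ).symm

theorem SameType.trans' {α : Type v} {x y z : α → M} (h1 : SameType L M x y)
    (h2 : SameType L M y z) : SameType L M x z := fun φ => (h1 φ).trans (h2 φ)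

theorem sameType_auto (σ : M ≃[L] M) {α : Type v} (x : α → M) :
    SameType L M x (⇑σ ∘ x) := fun φ => (StrongHomClass.realize_formula σ φ).symm

theorem IER.rel_comp_auto {β : Type u} (F : IER L M β) (σ : M ≃[L] M) {x y : β → M}
    (h : F.rel x y) : F.rel (⇑σ ∘ x) (⇑σ ∘ y) := by
  refine (F.invariant x y _ _ ?_).mp h
  have : Sum.elim (⇑σ ∘ x) (⇑σ ∘ y) = ⇑σ ∘ Sum.elim x y := (Sum.comp_elim _ _ _).symm
  rw [this]
  exact sameType_auto σ _

/-- The set of `N`-tuples realizing `φ` with parameters `e`. -/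
def Aset (N : L.ElementarySubstructure M) {β Γ : Type u} (e : Γ → M)
    (φ : L.Formula (Γ ⊕ β)) : Set (β → ↥(N : Set M)) :=
  {m | φ.Realize (Sum.elim e (fun v => ((m v : M))))}

theorem Aset_not (N : L.ElementarySubstructure M) {β Γ : Type u} (e : Γ → M)
    (φ : L.Formula (Γ ⊕ β)) : Aset N e φ.not = (Aset N (β := β) e φ)ᶜ :=
  Set.ext fun m => by simp [Aset, Language.Formula.realize_not]

theorem Aset_relabel (N : L.ElementarySubstructure M) {β Γ Γ' : Type u} (g : Γ' → Γ)
    (e : Γ → M) (φ : L.Formula (Γ' ⊕ β)) :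
    Aset N e (φ.relabel (Sum.map g id)) = Aset N (β := β) (e ∘ g) φ := by
  ext m
  have hc : (Sum.elim e (fun v => ((m v : M)))) ∘ Sum.map g id
      = Sum.elim (e ∘ g) (fun v => ((m v : M))) := funext (by rintro (x | x) <;> rfl)
  simp only [Aset, Set.mem_setOf_eq, Language.Formula.realize_relabel, hc]

/-- `x` realizes the `D`-coheir type over the parameters `e`. -/
def RealizesD (N : L.ElementarySubstructure M) {β : Type u}
    (D : Ultrafilter (β → ↥(N : Set M))) {Γ : Type u} (e : Γ → M) (x : β → M) : Prop :=
  ∀ φ : L.Formula (Γ ⊕ β), Aset N e φ ∈ D → φ.Realize (Sum.elim e x)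

theorem RealizesD.realize_iff {N : L.ElementarySubstructure M} {β : Type u}
    {D : Ultrafilter (β → ↥(N : Set M))} {Γ : Type u} {e : Γ → M} {x : β → M}
    (h : RealizesD N D e x) (φ : L.Formula (Γ ⊕ β)) :
    φ.Realize (Sum.elim e x) ↔ Aset N e φ ∈ D := by
  constructor
  · intro hr
    by_contra hn
    have hc : (Aset N (β := β) e φ)ᶜ ∈ D := Ultrafilter.compl_mem_iff_notMem.2 hn
    rw [← Aset_not] at hc
    exact Language.Formula.realize_not.1 (h φ.not hc) hr
  · exact h φ

theorem RealizesD.comp {N : L.ElementarySubstructure M} {β : Type u}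
    {D : Ultrafilter (β → ↥(N : Set M))} {Γ : Type u} {e : Γ → M} {x : β → M}
    (h : RealizesD N D e x) {Γ' : Type u} (g : Γ' → Γ) : RealizesD N D (e ∘ g) x := by
  intro φ hφ
  have h2 := h (φ.relabel (Sum.map g id)) (by rwa [Aset_relabel])
  rw [Language.Formula.realize_relabel] at h2
  have hc : (Sum.elim e x) ∘ Sum.map g id = Sum.elim (e ∘ g) x :=
    funext (by rintro (y | y) <;> rfl)
  rwa [hc] at h2

theorem memD_congr {N : L.ElementarySubstructure M} {β : Type u}
    {D : Ultrafilter (β → ↥(N : Set M))} {Γ' : Type u} {e1 e2 : Γ' → M}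
    (hst : SameType L M (Sum.elim (Subtype.val : ↥(N : Set M) → M) e1)
      (Sum.elim Subtype.val e2))
    (φ : L.Formula ((↥(N : Set M) ⊕ Γ') ⊕ β)) :
    Aset N (Sum.elim Subtype.val e1) φ ∈ D ↔ Aset N (Sum.elim Subtype.val e2) φ ∈ D := by
  suffices H : ∀ (e1 e2 : Γ' → M),
      SameType L M (Sum.elim (Subtype.val : ↥(N : Set M) → M) e1) (Sum.elim Subtype.val e2) →
      Aset N (Sum.elim Subtype.val e1) φ ∈ D → Aset N (Sum.elim Subtype.val e2) φ ∈ D from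
    ⟨H e1 e2 hst, H e2 e1 hst.symm'⟩
  clear hst e1 e2
  intro e1 e2 hst h1
  by_contra h2
  have hc : (Aset N (β := β) (Sum.elim Subtype.val e2) φ)ᶜ ∈ D :=
    Ultrafilter.compl_mem_iff_notMem.2 h2
  rw [← Aset_not] at hc
  obtain ⟨m, hm1, hm2⟩ := Ultrafilter.nonempty_of_mem (Filter.inter_mem h1 hc)
  have key : ∀ e : Γ' → M,
      (Sum.elim (Subtype.val : ↥(N : Set M) → M) e) ∘
        (Sum.elim id (fun v => Sum.inl (m v)) : (↥(N : Set M) ⊕ Γ') ⊕ β → ↥(N : Set M) ⊕ Γ')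
      = Sum.elim (Sum.elim Subtype.val e) (fun v => ((m v : M))) := by
    intro e
    funext z
    rcases z with (z | z) <;> rfl
  have hst2 := hst (φ.relabel (Sum.elim id (fun v => Sum.inl (m v))))
  rw [Language.Formula.realize_relabel, Language.Formula.realize_relabel, key e1, key e2] at hst2
  exact Language.Formula.realize_not.1 hm2 (hst2.mp hm1)

end Aux
section Aux2

open FirstOrder Language Set Cardinal

variable {L : FirstOrder.Language.{u, u}} {M : Type u} [L.Structure M]

theorem exists_realizesD {κbar : Cardinal.{u}} (mon : Monster L M κbar) {β : Type u}
    (hβ : #β < κbar) (N : L.ElementarySubstructure M)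
    (D : Ultrafilter (β → ↥(N : Set M))) {Γ : Type u} (hΓ : #Γ < κbar) (e : Γ → M) :
    ∃ x : β → M, RealizesD N D e x := by
  have hfin : ∀ s : Finset (L.Formula (Γ ⊕ β)), ↑s ⊆ {φ | Aset N e φ ∈ D} →
      ∃ x : β → M, ∀ φ ∈ s, φ.Realize (Sum.elim e x) := by
    intro s hs
    have hint : (⋂ φ ∈ s, Aset N e φ) ∈ D :=
      (Filter.biInter_finset_mem s).2 fun φ hφ => hs hφ
    obtain ⟨m, hm⟩ := Ultrafilter.nonempty_of_mem hint
    refine ⟨fun v => ((m v : M)), fun φ hφ => ?_⟩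
    exact Set.mem_iInter₂.mp hm φ hφ
  obtain ⟨x, hx⟩ := mon.saturated Γ β hΓ hβ e {φ | Aset N e φ ∈ D} hfin
  exact ⟨x, fun φ hφ => hx φ hφ⟩

/-- Every formula with parameters in an elementary substructure realized in `M` is
realized by a tuple from the substructure. -/
theorem exists_witness_in (N : L.ElementarySubstructure M)
    [Nonempty ↥(N : Set M)] {β : Type u}
    (ψ : L.Formula (↥(N : Set M) ⊕ β)) (b : β → M)
    (h : ψ.Realize (Sum.elim Subtype.val b)) :
    ∃ m : β → ↥(N : Set M), ψ.Realize (Sum.elim Subtype.val (fun v => ((m v : M)))) := by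
  classical
  set s : Set (↥(N : Set M) ⊕ β) := ↑ψ.freeVarFinset with hs
  have hsub : ↑ψ.freeVarFinset ⊆ s := le_refl _
  set χ : L.Formula ↥s := ψ.restrictFreeVar (Set.inclusion hsub) with hχ
  haveI : Finite ↥s := ψ.freeVarFinset.finite_toSet.to_subtype
  set f : ↥s → ↥(N : Set M) ⊕ ↥s := fun x =>
    Sum.elim (fun t => Sum.inl t) (fun _ => Sum.inr x) x.1 with hf
  set χE : L.Formula ↥(N : Set M) := Language.Formula.iExs ↥s (χ.relabel f) with hχE
  have hreal : ∀ (v : ↥(N : Set M) ⊕ β → M),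
      χ.Realize (v ∘ (Subtype.val : ↥s → ↥(N : Set M) ⊕ β)) ↔ ψ.Realize v := by
    intro v
    exact Language.BoundedFormula.realize_restrictFreeVar' hsub
  have hM : χE.Realize (Subtype.val : ↥(N : Set M) → M) := by
    rw [hχE, Language.Formula.realize_iExs]
    refine ⟨(Sum.elim Subtype.val b) ∘ (Subtype.val : ↥s → ↥(N : Set M) ⊕ β), ?_⟩
    have : (fun a : ↥s => Sum.elim (Subtype.val : ↥(N : Set M) → M)
        ((Sum.elim Subtype.val b) ∘ (Subtype.val : ↥s → ↥(N : Set M) ⊕ β)) (f a))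
        = (Sum.elim Subtype.val b) ∘ (Subtype.val : ↥s → ↥(N : Set M) ⊕ β) := by
      funext a
      rcases ha : a.1 with t | v <;> simp [hf, ha]
    rw [← hreal, ← this] at h
    rw [Language.Formula.realize_relabel]; exact h
  -- transfer to N
  have hMN : χE.Realize (⇑N.subtype ∘ (id : ↥(N : Set M) → ↥(N : Set M))) := by
    have : ⇑N.subtype ∘ (id : ↥(N : Set M) → ↥(N : Set M)) = Subtype.val := rfl
    rw [this]; exact hM
  rw [N.subtype.map_formula] at hMN
  rw [hχE, Language.Formula.realize_iExs] at hMN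
  obtain ⟨i, hi⟩ := hMN
  set m : β → ↥(N : Set M) := fun v =>
    if hv : (Sum.inr v : ↥(N : Set M) ⊕ β) ∈ s then i ⟨Sum.inr v, hv⟩
    else Classical.arbitrary _  with hm
  refine ⟨m, ?_⟩
  rw [← hreal]
  have hpush := (N.subtype.map_formula χ (fun a => Sum.elim id i (f a))).2 (by rw [Language.Formula.realize_relabel] at hi; exact hi)
  have heq : ⇑N.subtype ∘ (fun a => Sum.elim id i (f a))
      = (Sum.elim (Subtype.val : ↥(N : Set M) → M) (fun v => ((m v : M)))) ∘
        (Subtype.val : ↥s → ↥(N : Set M) ⊕ β) := by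
    funext a
    rcases ha : a.1 with t | v
    · simp [hf, ha, Language.ElementarySubstructure.coe_subtype]
    · have hv : (Sum.inr v : ↥(N : Set M) ⊕ β) ∈ s := by rw [← ha]; exact a.2
      have hma : m v = i a := by
        rw [hm]
        simp only [hv, dif_pos]
        congr 1
        exact Subtype.ext ha.symm
      simp [hf, ha, hma, Language.ElementarySubstructure.coe_subtype]
  rwa [heq] at hpush

end Aux2
section Aux3

open FirstOrder Language Set Cardinal

variable {L : FirstOrder.Language.{u, u}} {M : Type u} [L.Structure M]

/-- The parameter tuple `N, b, b', f 0, …, f (i-1)` for the `i`-th step of a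
coheir sequence construction. -/
def stepParam (N : L.ElementarySubstructure M) {β : Type u} (b b' : β → M)
    (f : ℕ → β → M) (i : ℕ) : (↥(N : Set M) ⊕ ((β ⊕ β) ⊕ (Fin i × β))) → M :=
  Sum.elim Subtype.val (Sum.elim (Sum.elim b b') (fun p => f p.1 p.2))

/-- `f` is a coheir (Morley) sequence over `N, b, b'` up to `n`. -/
def GoodUpTo (N : L.ElementarySubstructure M) {β : Type u}
    (D : Ultrafilter (β → ↥(N : Set M))) (b b' : β → M) (f : ℕ → β → M) (n : ℕ) : Prop :=
  ∀ i, i < n → RealizesD N D (stepParam N b b' f i) (f i)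

theorem stepParam_congr {N : L.ElementarySubstructure M} {β : Type u} {b b' : β → M}
    {f g : ℕ → β → M} {i : ℕ} (h : ∀ j, j < i → f j = g j) :
    stepParam N b b' f i = stepParam N b b' g i := by
  funext z
  rcases z with t | (v | p)
  · rfl
  · rfl
  · exact congrFun (h p.1 p.1.isLt) p.2

theorem exists_goodUpTo {κbar : Cardinal.{u}} (mon : Monster L M κbar) {β : Type u}
    (hβ : #β < κbar) (N : L.ElementarySubstructure M) (hN : #(N : Set M) < κbar)
    (D : Ultrafilter (β → ↥(N : Set M))) (b b' : β → M) (n : ℕ) :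
    ∃ f : ℕ → β → M, GoodUpTo N D b b' f n := by
  induction n with
  | zero => exact ⟨fun _ => b, fun i h => absurd h (Nat.not_lt_zero i)⟩
  | succ n ih =>
    obtain ⟨f, hf⟩ := ih
    have hℵ : ℵ₀ ≤ κbar := mon.aleph0_lt.le
    have hΓ : #(↥(N : Set M) ⊕ ((β ⊕ β) ⊕ (Fin n × β))) < κbar := by
      simp only [mk_sum, mk_prod, lift_id, mk_fin, lift_uzero, lift_natCast]
      refine Cardinal.add_lt_of_lt hℵ hN (Cardinal.add_lt_of_lt hℵ
        (Cardinal.add_lt_of_lt hℵ hβ hβ) (Cardinal.mul_lt_of_lt hℵ ?_ hβ))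
      exact (nat_lt_aleph0 n).trans mon.aleph0_lt
    obtain ⟨x, hx⟩ := exists_realizesD mon hβ N D hΓ (stepParam N b b' f n)
    refine ⟨Function.update f n x, fun i hi => ?_⟩
    have hupd : ∀ j, j < n → Function.update f n x j = f j := fun j hj =>
      Function.update_of_ne (Nat.ne_of_lt hj) x f
    rcases Nat.lt_succ_iff_lt_or_eq.mp hi with hi' | rfl
    · have h1 := hf i hi'
      have h2 : stepParam N b b' (Function.update f n x) i = stepParam N b b' f i :=
        stepParam_congr (fun j hj => hupd j (lt_of_lt_of_le hj (Nat.le_of_lt_succ hi)))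
      rw [h2, Function.update_of_ne (Nat.ne_of_lt hi') x f]
      exact h1
    · have h2 : stepParam N b b' (Function.update f i x) i = stepParam N b b' f i :=
        stepParam_congr (fun j hj => hupd j hj)
      rw [h2, Function.update_self]
      exact hx

theorem GoodUpTo.pair {N : L.ElementarySubstructure M} {β : Type u}
    {D : Ultrafilter (β → ↥(N : Set M))} {b b' : β → M} {f : ℕ → β → M} {n : ℕ}
    (hf : GoodUpTo N D b b' f n) {i j : ℕ} (hij : i < j) (hj : j < n) :
    RealizesD N D (Sum.elim (Subtype.val : ↥(N : Set M) → M) (f i)) (f j) := by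
  have h := (hf j hj).comp (Sum.elim Sum.inl
    (fun v => Sum.inr (Sum.inr (⟨i, hij⟩, v))) : ↥(N : Set M) ⊕ β → _)
  have heq : stepParam N b b' f j ∘ (Sum.elim Sum.inl
      (fun v => Sum.inr (Sum.inr (⟨i, hij⟩, v))) : ↥(N : Set M) ⊕ β → _)
      = Sum.elim (Subtype.val : ↥(N : Set M) → M) (f i) := funext (by rintro (t | v) <;> rfl)
  rwa [heq] at h

theorem GoodUpTo.withB {N : L.ElementarySubstructure M} {β : Type u}
    {D : Ultrafilter (β → ↥(N : Set M))} {b b' : β → M} {f : ℕ → β → M} {n : ℕ}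
    (hf : GoodUpTo N D b b' f n) {j : ℕ} (hj : j < n) :
    RealizesD N D (Sum.elim (Subtype.val : ↥(N : Set M) → M) b) (f j) := by
  have h := (hf j hj).comp (Sum.elim Sum.inl
    (fun v => Sum.inr (Sum.inl (Sum.inl v))) : ↥(N : Set M) ⊕ β → _)
  have heq : stepParam N b b' f j ∘ (Sum.elim Sum.inl
      (fun v => Sum.inr (Sum.inl (Sum.inl v))) : ↥(N : Set M) ⊕ β → _)
      = Sum.elim (Subtype.val : ↥(N : Set M) → M) b := funext (by rintro (t | v) <;> rfl)
  rwa [heq] at h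

theorem GoodUpTo.withB' {N : L.ElementarySubstructure M} {β : Type u}
    {D : Ultrafilter (β → ↥(N : Set M))} {b b' : β → M} {f : ℕ → β → M} {n : ℕ}
    (hf : GoodUpTo N D b b' f n) {j : ℕ} (hj : j < n) :
    RealizesD N D (Sum.elim (Subtype.val : ↥(N : Set M) → M) b') (f j) := by
  have h := (hf j hj).comp (Sum.elim Sum.inl
    (fun v => Sum.inr (Sum.inl (Sum.inr v))) : ↥(N : Set M) ⊕ β → _)
  have heq : stepParam N b b' f j ∘ (Sum.elim Sum.inl
      (fun v => Sum.inr (Sum.inl (Sum.inr v))) : ↥(N : Set M) ⊕ β → _)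
      = Sum.elim (Subtype.val : ↥(N : Set M) → M) b' := funext (by rintro (t | v) <;> rfl)
  rwa [heq] at h

theorem GoodUpTo.unary {N : L.ElementarySubstructure M} {β : Type u}
    {D : Ultrafilter (β → ↥(N : Set M))} {b b' : β → M} {f : ℕ → β → M} {n : ℕ}
    (hf : GoodUpTo N D b b' f n) {j : ℕ} (hj : j < n) :
    RealizesD N D (Subtype.val : ↥(N : Set M) → M) (f j) := by
  have h := (hf j hj).comp (Sum.inl : ↥(N : Set M) → _)
  have heq : stepParam N b b' f j ∘ (Sum.inl : ↥(N : Set M) → _)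
      = (Subtype.val : ↥(N : Set M) → M) := rfl
  rwa [heq] at h

theorem st_unary {N : L.ElementarySubstructure M} {β : Type u}
    {D : Ultrafilter (β → ↥(N : Set M))} {x y : β → M}
    (hx : RealizesD N D (Subtype.val : ↥(N : Set M) → M) x)
    (hy : RealizesD N D (Subtype.val : ↥(N : Set M) → M) y) :
    SameType L M (Sum.elim (Subtype.val : ↥(N : Set M) → M) x) (Sum.elim Subtype.val y) :=
  fun ψ => (hx.realize_iff ψ).trans (hy.realize_iff ψ).symm

end Aux3
section Aux4

open FirstOrder Language Set Cardinal

/-- Relabeling sending the pair formula `φ(N; x, y)` to `φ(N; b, x_i)`. -/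
def relab1 {T β ι : Type u} (i : ι) : ((T ⊕ β) ⊕ β) → ((T ⊕ (β ⊕ β)) ⊕ (ι × β)) :=
  Sum.elim (Sum.elim (fun t => Sum.inl (Sum.inl t))
    (fun v => Sum.inl (Sum.inr (Sum.inl v)))) (fun v => Sum.inr (i, v))

/-- Relabeling sending the pair formula `φ(N; x, y)` to `φ(N; b', x_i)`. -/
def relab1' {T β ι : Type u} (i : ι) : ((T ⊕ β) ⊕ β) → ((T ⊕ (β ⊕ β)) ⊕ (ι × β)) :=
  Sum.elim (Sum.elim (fun t => Sum.inl (Sum.inl t))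
    (fun v => Sum.inl (Sum.inr (Sum.inr v)))) (fun v => Sum.inr (i, v))

/-- Relabeling sending the pair formula `φ(N; x, y)` to `φ(N; x_i, x_j)`. -/
def relab2 {T β ι : Type u} (i j : ι) : ((T ⊕ β) ⊕ β) → ((T ⊕ (β ⊕ β)) ⊕ (ι × β)) :=
  Sum.elim (Sum.elim (fun t => Sum.inl (Sum.inl t))
    (fun v => Sum.inr (i, v))) (fun v => Sum.inr (j, v))

theorem comp_relab1 {T β ι : Type u} {X : Type*} (e : T → X) (x y : β → X)
    (w : ι × β → X) (i : ι) :
    (Sum.elim (Sum.elim e (Sum.elim x y)) w) ∘ relab1 i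
      = Sum.elim (Sum.elim e x) (fun v => w (i, v)) :=
  funext (by rintro ((t | v) | v) <;> rfl)

theorem comp_relab1' {T β ι : Type u} {X : Type*} (e : T → X) (x y : β → X)
    (w : ι × β → X) (i : ι) :
    (Sum.elim (Sum.elim e (Sum.elim x y)) w) ∘ relab1' i
      = Sum.elim (Sum.elim e y) (fun v => w (i, v)) :=
  funext (by rintro ((t | v) | v) <;> rfl)

theorem comp_relab2 {T β ι : Type u} {X : Type*} (e : T → X) (x y : β → X)
    (w : ι × β → X) (i j : ι) :
    (Sum.elim (Sum.elim e (Sum.elim x y)) w) ∘ relab2 i j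
      = Sum.elim (Sum.elim e (fun v => w (i, v))) (fun v => w (j, v)) :=
  funext (by rintro ((t | v) | v) <;> rfl)

variable {L : FirstOrder.Language.{u, u}} {M : Type u} [L.Structure M]

/-- Encoding of the stretched-sequence type as an image. -/
def encFml {T β ι : Type u} (d : ((ι ⊕ ι) ⊕ ι × ι) × L.Formula ((T ⊕ β) ⊕ β)) :
    L.Formula ((T ⊕ (β ⊕ β)) ⊕ (ι × β)) :=
  d.2.relabel (Sum.elim (Sum.elim relab1 relab1') (fun p => relab2 p.1 p.2) d.1)

end Aux4
section Key

open FirstOrder Language Set Cardinal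

variable {L : FirstOrder.Language.{u, u}} {M : Type u} [L.Structure M]

/-- **Key Lemma**: if `b_F` is bounded over `a_E` and `N` is a small model containing `a`,
then every automorphism fixing `N` pointwise fixes `b_F`. -/
theorem keyLemma {κbar : Cardinal.{u}} (mon : Monster L M κbar)
    {α β : Type u} (hβ : #β < κbar)
    (E : IER L M α) (a : α → M) (F : IER L M β) (b : β → M)
    (hbdd : BddU L M κbar (autU L M E a) F b)
    (N : L.ElementarySubstructure M) (hN : #(N : Set M) < κbar)
    (haN : Set.range a ⊆ (N : Set M))
    (σ0 : M ≃[L] M) (hσ0 : ∀ x ∈ (N : Set M), σ0 x = x) :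
    F.rel b (⇑σ0 ∘ b) := by
  classical
  by_cases hβe : IsEmpty β
  · have hbb : ⇑σ0 ∘ b = b := funext fun v => hβe.elim v
    rw [hbb]; exact F.equiv.refl b
  rw [not_isEmpty_iff] at hβe
  haveI : Nonempty M := ⟨b (Classical.arbitrary β)⟩
  haveI hTne : Nonempty ↥(N : Set M) := (inferInstance : Nonempty N)
  have hℵ : ℵ₀ ≤ κbar := mon.aleph0_lt.le
  -- an ultrafilter concentrating on the type of `b` over `N`
  have hfip : ∀ Ts : Finset (Set (β → ↥(N : Set M))),
      ↑Ts ⊆ {A | ∃ ψ : L.Formula (↥(N : Set M) ⊕ β),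
        ψ.Realize (Sum.elim Subtype.val b) ∧ A = Aset N Subtype.val ψ} →
      (⋂₀ (↑Ts : Set (Set (β → ↥(N : Set M))))).Nonempty := by
    intro Ts hTs
    have hψs : ∀ A : {A // A ∈ Ts}, ∃ ψ : L.Formula (↥(N : Set M) ⊕ β),
        ψ.Realize (Sum.elim Subtype.val b) ∧ A.1 = Aset N Subtype.val ψ :=
      fun A => hTs A.2
    choose ψs hψs1 hψs2 using hψs
    have hconj : ((Ts.attach.toList.map ψs).foldr (· ⊓ ·) ⊤).Realize
        (Sum.elim (Subtype.val : ↥(N : Set M) → M) b) := by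
      refine (Language.BoundedFormula.realize_foldr_inf _
        (Sum.elim (Subtype.val : ↥(N : Set M) → M) b) (default : Fin 0 → M)).2 ?_
      intro φ hφ
      obtain ⟨A, _, rfl⟩ := List.mem_map.1 hφ
      exact hψs1 A
    obtain ⟨m, hm⟩ := exists_witness_in N ((Ts.attach.toList.map ψs).foldr (· ⊓ ·) ⊤) b hconj
    refine ⟨m, ?_⟩
    intro A hA
    have hA' : A ∈ Ts := hA
    have hAeq : A = Aset N Subtype.val (ψs ⟨A, hA'⟩) := hψs2 ⟨A, hA'⟩
    rw [hAeq]
    have hmem : ψs ⟨A, hA'⟩ ∈ Ts.attach.toList.map ψs :=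
      List.mem_map.2 ⟨⟨A, hA'⟩, by simp, rfl⟩
    exact (Language.BoundedFormula.realize_foldr_inf _ _ _).1 hm _ hmem
  obtain ⟨D, hD⟩ := Ultrafilter.exists_ultrafilter_of_finite_inter_nonempty _ hfip
  -- `b` realizes the coheir type over `N`
  have hbD : RealizesD N D (Subtype.val : ↥(N : Set M) → M) b := by
    intro ψ hψ
    by_contra hr
    have h2 : Aset N (Subtype.val : ↥(N : Set M) → M) ψ.not ∈ D :=
      hD ⟨ψ.not, Language.Formula.realize_not.2 hr, rfl⟩
    rw [Aset_not] at h2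
    exact Ultrafilter.compl_mem_iff_notMem.mp h2 hψ
  set b' : β → M := ⇑σ0 ∘ b with hb'def
  have hstbb' : SameType L M (Sum.elim (Subtype.val : ↥(N : Set M) → M) b)
      (Sum.elim Subtype.val b') := by
    have hc : ⇑σ0 ∘ (Sum.elim (Subtype.val : ↥(N : Set M) → M) b)
        = Sum.elim Subtype.val b' := by
      funext z; rcases z with t | v
      · exact hσ0 t.1 t.2
      · rfl
    have h := sameType_auto σ0 (Sum.elim (Subtype.val : ↥(N : Set M) → M) b)
    rwa [hc] at h
  have hb'D : RealizesD N D (Subtype.val : ↥(N : Set M) → M) b' :=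
    fun ψ hψ => (hstbb' ψ).mp (hbD ψ hψ)
  -- complements
  have hrnot : ∀ φ : L.Formula ((↥(N : Set M) ⊕ β) ⊕ β),
      Aset N (Sum.elim Subtype.val b) φ ∉ D →
      Aset N (Sum.elim Subtype.val b) φ.not ∈ D := by
    intro φ h
    rw [Aset_not]
    exact Ultrafilter.compl_mem_iff_notMem.2 h
  -- bounding set
  obtain ⟨S, hScard, hS⟩ := hbdd
  have hSlam : #S < Order.succ (#S) := Order.lt_succ _
  have hlam : Order.succ (#S) < κbar :=
    lt_of_le_of_lt (Order.succ_le_of_lt (Cardinal.cantor (#S))) (mon.strongLimit _ hScard)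
  set ι := (Order.succ (#S)).ord.ToType with hι_def
  haveI hιne : Nonempty ι := by
    rw [hι_def, Ordinal.toType_nonempty_iff_ne_zero, ne_eq, Cardinal.ord_eq_zero]
    exact ((show (0 : Cardinal) ≤ #S from zero_le).trans_lt hSlam).ne'
  have hικ : #ι = Order.succ (#S) := by rw [hι_def, Cardinal.mk_toType, Cardinal.card_ord]
  -- facts about good (coheir) sequences
  have hkey1 : ∀ (f : ℕ → β → M) (n : ℕ), GoodUpTo N D b b' f n → ∀ j, j < n →
      ∀ φ : L.Formula ((↥(N : Set M) ⊕ β) ⊕ β),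
        (Aset N (Sum.elim Subtype.val b) φ ∈ D ↔
          φ.Realize (Sum.elim (Sum.elim Subtype.val b) (f j))) :=
    fun f n hf j hj φ => ((hf.withB hj).realize_iff φ).symm
  have hkey1' : ∀ (f : ℕ → β → M) (n : ℕ), GoodUpTo N D b b' f n → ∀ j, j < n →
      ∀ φ : L.Formula ((↥(N : Set M) ⊕ β) ⊕ β),
        (Aset N (Sum.elim Subtype.val b) φ ∈ D ↔
          φ.Realize (Sum.elim (Sum.elim Subtype.val b') (f j))) := by
    intro f n hf j hj φ
    rw [(hf.withB' hj).realize_iff φ]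
    exact memD_congr hstbb' φ
  have hkey2 : ∀ (f : ℕ → β → M) (n : ℕ), GoodUpTo N D b b' f n →
      ∀ j1 j2, j1 < j2 → j2 < n →
      ∀ φ : L.Formula ((↥(N : Set M) ⊕ β) ⊕ β),
        (Aset N (Sum.elim Subtype.val b) φ ∈ D ↔
          φ.Realize (Sum.elim (Sum.elim Subtype.val (f j1)) (f j2))) := by
    intro f n hf j1 j2 h12 hj2 φ
    rw [(hf.pair h12 hj2).realize_iff φ]
    exact memD_congr (st_unary hbD (hf.unary (lt_trans h12 hj2))) φ
  -- the stretched type is finitely satisfiable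
  have hsatfin : ∀ s : Finset (L.Formula ((↥(N : Set M) ⊕ (β ⊕ β)) ⊕ (ι × β))),
      ↑s ⊆ encFml '' {d : ((ι ⊕ ι) ⊕ ι × ι) × L.Formula ((↥(N : Set M) ⊕ β) ⊕ β) |
        Aset N (Sum.elim Subtype.val b) d.2 ∈ D ∧ ∀ p, d.1 = Sum.inr p → p.1 < p.2} →
      ∃ w : ι × β → M, ∀ φ ∈ s,
        φ.Realize (Sum.elim (Sum.elim Subtype.val (Sum.elim b b')) w) := by
    intro s hs
    obtain ⟨s', hs'U, hs'img⟩ := Finset.subset_set_image_iff.mp hs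
    set I : Finset ι := s'.biUnion (fun d =>
      Sum.elim (Sum.elim (fun i => {i}) (fun i => {i})) (fun p => {p.1, p.2}) d.1) with hI
    obtain ⟨f, hf⟩ := exists_goodUpTo mon hβ N hN D b b' I.card
    refine ⟨fun q => if h : q.1 ∈ I then
      f (((I.orderIsoOfFin rfl).symm ⟨q.1, h⟩ : Fin I.card) : ℕ) q.2 else b q.2, ?_⟩
    have hwI : ∀ (i : ι) (hi : i ∈ I),
        (fun v => (fun q : ι × β => if h : q.1 ∈ I then
          f (((I.orderIsoOfFin rfl).symm ⟨q.1, h⟩ : Fin I.card) : ℕ) q.2 else b q.2) (i, v))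
        = f (((I.orderIsoOfFin rfl).symm ⟨i, hi⟩ : Fin I.card) : ℕ) := by
      intro i hi
      funext v
      simp only [dif_pos hi]
    intro χ hχ
    rw [← hs'img] at hχ
    obtain ⟨d, hd, rfl⟩ := Finset.mem_image.mp hχ
    obtain ⟨hdr, hdlt⟩ := hs'U hd
    obtain ⟨dt, φ⟩ := d
    rcases dt with (i | i) | p
    · have hi : i ∈ I := Finset.mem_biUnion.2 ⟨_, hd, by simp⟩
      show (φ.relabel (relab1 i)).Realize _
      rw [Language.Formula.realize_relabel, comp_relab1, hwI i hi]
      exact (hkey1 f I.card hf _ (Fin.isLt _) φ).1 hdr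
    · have hi : i ∈ I := Finset.mem_biUnion.2 ⟨_, hd, by simp⟩
      show (φ.relabel (relab1' i)).Realize _
      rw [Language.Formula.realize_relabel, comp_relab1', hwI i hi]
      exact (hkey1' f I.card hf _ (Fin.isLt _) φ).1 hdr
    · have hi1 : p.1 ∈ I := Finset.mem_biUnion.2 ⟨_, hd, by simp⟩
      have hi2 : p.2 ∈ I := Finset.mem_biUnion.2 ⟨_, hd, by simp⟩
      have hplt : p.1 < p.2 := hdlt p rfl
      have hposlt : (((I.orderIsoOfFin rfl).symm ⟨p.1, hi1⟩ : Fin I.card) : ℕ)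
          < (((I.orderIsoOfFin rfl).symm ⟨p.2, hi2⟩ : Fin I.card) : ℕ) := by
        have : ((I.orderIsoOfFin rfl).symm ⟨p.1, hi1⟩ : Fin I.card)
            < (I.orderIsoOfFin rfl).symm ⟨p.2, hi2⟩ :=
          (OrderIso.lt_iff_lt _).2 (Subtype.mk_lt_mk.2 hplt)
        exact this
      show (φ.relabel (relab2 p.1 p.2)).Realize _
      rw [Language.Formula.realize_relabel, comp_relab2, hwI p.1 hi1, hwI p.2 hi2]
      exact (hkey2 f I.card hf _ _ hposlt (Fin.isLt _) φ).1 hdr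
  -- realize the stretched type
  have hΓcard : #(↥(N : Set M) ⊕ (β ⊕ β)) < κbar := by
    simp only [mk_sum, lift_id]
    exact Cardinal.add_lt_of_lt hℵ hN (Cardinal.add_lt_of_lt hℵ hβ hβ)
  have hιβcard : #(ι × β) < κbar := by
    simp only [mk_prod, lift_id]
    exact Cardinal.mul_lt_of_lt hℵ (hικ ▸ hlam) hβ
  obtain ⟨w, hwreal⟩ := mon.saturated _ _ hΓcard hιβcard
    (Sum.elim Subtype.val (Sum.elim b b'))
    (encFml '' {d : ((ι ⊕ ι) ⊕ ι × ι) × L.Formula ((↥(N : Set M) ⊕ β) ⊕ β) |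
      Aset N (Sum.elim Subtype.val b) d.2 ∈ D ∧ ∀ p, d.1 = Sum.inr p → p.1 < p.2})
    hsatfin
  -- consequences of the stretched type
  have hK1 : ∀ (i : ι) (φ : L.Formula ((↥(N : Set M) ⊕ β) ⊕ β)),
      φ.Realize (Sum.elim (Sum.elim Subtype.val b) (fun v => w (i, v))) ↔
        Aset N (Sum.elim Subtype.val b) φ ∈ D := by
    intro i φ
    have hr1 : ∀ ψ : L.Formula ((↥(N : Set M) ⊕ β) ⊕ β),
        Aset N (Sum.elim Subtype.val b) ψ ∈ D →
        ψ.Realize (Sum.elim (Sum.elim Subtype.val b) (fun v => w (i, v))) := by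
      intro ψ hψ
      have hreal := hwreal _ (Set.mem_image_of_mem encFml
        (show (Sum.inl (Sum.inl i), ψ) ∈ _ from ⟨hψ, fun p hp => (Sum.inl_ne_inr hp).elim⟩))
      have : (ψ.relabel (relab1 i)).Realize
          (Sum.elim (Sum.elim Subtype.val (Sum.elim b b')) w) := hreal
      rwa [Language.Formula.realize_relabel, comp_relab1] at this
    constructor
    · intro h
      by_contra hn
      exact Language.Formula.realize_not.1 (hr1 φ.not (hrnot φ hn)) h
    · exact hr1 φ
  have hK1' : ∀ (i : ι) (φ : L.Formula ((↥(N : Set M) ⊕ β) ⊕ β)),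
      φ.Realize (Sum.elim (Sum.elim Subtype.val b') (fun v => w (i, v))) ↔
        Aset N (Sum.elim Subtype.val b) φ ∈ D := by
    intro i φ
    have hr1 : ∀ ψ : L.Formula ((↥(N : Set M) ⊕ β) ⊕ β),
        Aset N (Sum.elim Subtype.val b) ψ ∈ D →
        ψ.Realize (Sum.elim (Sum.elim Subtype.val b') (fun v => w (i, v))) := by
      intro ψ hψ
      have hreal := hwreal _ (Set.mem_image_of_mem encFml
        (show (Sum.inl (Sum.inr i), ψ) ∈ _ from ⟨hψ, fun p hp => (Sum.inl_ne_inr hp).elim⟩))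
      have : (ψ.relabel (relab1' i)).Realize
          (Sum.elim (Sum.elim Subtype.val (Sum.elim b b')) w) := hreal
      rwa [Language.Formula.realize_relabel, comp_relab1'] at this
    constructor
    · intro h
      by_contra hn
      exact Language.Formula.realize_not.1 (hr1 φ.not (hrnot φ hn)) h
    · exact hr1 φ
  have hK2 : ∀ (i j : ι), i < j → ∀ φ : L.Formula ((↥(N : Set M) ⊕ β) ⊕ β),
      φ.Realize (Sum.elim (Sum.elim Subtype.val (fun v => w (i, v))) (fun v => w (j, v))) ↔
        Aset N (Sum.elim Subtype.val b) φ ∈ D := by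
    intro i j hij φ
    have hr1 : ∀ ψ : L.Formula ((↥(N : Set M) ⊕ β) ⊕ β),
        Aset N (Sum.elim Subtype.val b) ψ ∈ D →
        ψ.Realize (Sum.elim (Sum.elim Subtype.val (fun v => w (i, v)))
          (fun v => w (j, v))) := by
      intro ψ hψ
      have hreal := hwreal _ (Set.mem_image_of_mem encFml
        (show (Sum.inr (i, j), ψ) ∈ _ from
          ⟨hψ, fun p hp => by cases Sum.inr.inj hp; exact hij⟩))
      have : (ψ.relabel (relab2 i j)).Realize
          (Sum.elim (Sum.elim Subtype.val (Sum.elim b b')) w) := hreal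
      rwa [Language.Formula.realize_relabel, comp_relab2] at this
    constructor
    · intro h
      by_contra hn
      exact Language.Formula.realize_not.1 (hr1 φ.not (hrnot φ hn)) h
    · exact hr1 φ
  -- each element of the stretched sequence has the same type as b over N
  have hK3 : ∀ i : ι, SameType L M (Sum.elim (Subtype.val : ↥(N : Set M) → M) b)
      (Sum.elim Subtype.val (fun v => w (i, v))) := by
    intro i ψ
    have h1 : ψ.Realize (Sum.elim (Subtype.val : ↥(N : Set M) → M) (fun v => w (i, v))) ↔
        (ψ.relabel (Sum.map (Sum.inl : ↥(N : Set M) → ↥(N : Set M) ⊕ β) id)).Realize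
          (Sum.elim (Sum.elim Subtype.val b) (fun v => w (i, v))) := by
      rw [Language.Formula.realize_relabel]
      have hc : (Sum.elim (Sum.elim (Subtype.val : ↥(N : Set M) → M) b)
          (fun v => w (i, v))) ∘ Sum.map (Sum.inl : ↥(N : Set M) → ↥(N : Set M) ⊕ β) id
          = Sum.elim Subtype.val (fun v => w (i, v)) := funext (by rintro (t | v) <;> rfl)
      rw [hc]
    rw [h1, hK1 i, Aset_relabel, Sum.elim_comp_inl]
    exact hbD.realize_iff ψ
  have hTβ : #(↥(N : Set M) ⊕ β) < κbar := by
    simp only [mk_sum, lift_id]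
    exact Cardinal.add_lt_of_lt hℵ hN hβ
  -- each element of the stretched sequence is conjugate to b over N
  have hK4 : ∀ i : ι, ∃ σ : M ≃[L] M, (∀ t : ↥(N : Set M), σ t.1 = t.1) ∧
      ⇑σ ∘ b = fun v => w (i, v) := by
    intro i
    obtain ⟨σ, hσ⟩ := mon.homog (↥(N : Set M) ⊕ β) (Sum.elim Subtype.val b)
      (Sum.elim Subtype.val (fun v => w (i, v))) hTβ (hK3 i)
    exact ⟨σ, fun t => hσ (Sum.inl t), funext fun v => hσ (Sum.inr v)⟩
  -- the pigeonhole argument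
  have hmain : ∀ x : β → M,
      (∀ (i : ι) (φ : L.Formula ((↥(N : Set M) ⊕ β) ⊕ β)),
        φ.Realize (Sum.elim (Sum.elim Subtype.val x) (fun v => w (i, v))) ↔
          Aset N (Sum.elim Subtype.val b) φ ∈ D) →
      ∀ i0 : ι, F.rel x (fun v => w (i0, v)) := by
    intro x hKx i0
    by_contra hcon
    have hθ : ∀ (i : ι) (θ : L.Formula (β ⊕ β)),
        θ.Realize (Sum.elim x (fun v => w (i, v))) ↔
          Aset N (Sum.elim Subtype.val b) (θ.relabel (Sum.map (Sum.inr : β → ↥(N : Set M) ⊕ β) id)) ∈ D := by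
      intro i θ
      rw [← hKx i (θ.relabel (Sum.map (Sum.inr : β → ↥(N : Set M) ⊕ β) id)), Language.Formula.realize_relabel]
      have hc : (Sum.elim (Sum.elim (Subtype.val : ↥(N : Set M) → M) x)
          (fun v => w (i, v))) ∘ Sum.map (Sum.inr : β → ↥(N : Set M) ⊕ β) id
          = Sum.elim x (fun v => w (i, v)) := funext (by rintro (t | v) <;> rfl)
      rw [hc]
    have hθc : ∀ (i j : ι), i < j → ∀ θ : L.Formula (β ⊕ β),
        θ.Realize (Sum.elim (fun v => w (i, v)) (fun v => w (j, v))) ↔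
          Aset N (Sum.elim Subtype.val b) (θ.relabel (Sum.map (Sum.inr : β → ↥(N : Set M) ⊕ β) id)) ∈ D := by
      intro i j hij θ
      rw [← hK2 i j hij (θ.relabel (Sum.map (Sum.inr : β → ↥(N : Set M) ⊕ β) id)), Language.Formula.realize_relabel]
      have hc : (Sum.elim (Sum.elim (Subtype.val : ↥(N : Set M) → M) (fun v => w (i, v)))
          (fun v => w (j, v))) ∘ Sum.map (Sum.inr : β → ↥(N : Set M) ⊕ β) id
          = Sum.elim (fun v => w (i, v)) (fun v => w (j, v)) :=
        funext (by rintro (t | v) <;> rfl)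
      rw [hc]
    have hnoti : ∀ i : ι, ¬ F.rel x (fun v => w (i, v)) := by
      intro i hFi
      exact hcon ((F.invariant _ _ _ _
        (fun θ => (hθ i θ).trans ((hθ i0 θ).symm))).mp hFi)
    have hpairs : ∀ i j : ι, i < j → ¬ F.rel (fun v => w (i, v)) (fun v => w (j, v)) := by
      intro i j hij hFij
      exact hnoti j ((F.invariant _ _ _ _
        (fun θ => (hθc i j hij θ).trans ((hθ j θ).symm))).mp hFij)
    have horb : ∀ i : ι, ∃ s, s ∈ S ∧ F.rel (fun v => w (i, v)) s := by
      intro i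
      obtain ⟨σ, hfix, hσb⟩ := hK4 i
      have hain : ⇑σ ∘ a = a := funext fun k => hfix ⟨a k, haN (Set.mem_range_self k)⟩
      have hmem : σ ∈ autU L M E a := by
        show E.rel a (⇑σ ∘ a)
        rw [hain]; exact E.equiv.refl a
      obtain ⟨s, hsS, hFs⟩ := hS σ hmem
      exact ⟨s, hsS, by rwa [hσb] at hFs⟩
    choose sfn hsfnS hsfnF using horb
    have hinj : Function.Injective (fun i : ι => (⟨sfn i, hsfnS i⟩ : ↥S)) := by
      intro i j hij
      by_contra hne
      have hsij : sfn i = sfn j := congrArg Subtype.val hij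
      rcases lt_trichotomy i j with h | h | h
      · exact hpairs i j h (F.equiv.trans (hsfnF i)
          (by rw [hsij]; exact F.equiv.symm (hsfnF j)))
      · exact hne h
      · exact hpairs j i h (F.equiv.trans (hsfnF j)
          (by rw [← hsij]; exact F.equiv.symm (hsfnF i)))
    have hle : Order.succ (#S) ≤ #S := by
      rw [← hικ]
      exact Cardinal.mk_le_of_injective hinj
    exact absurd hle (not_le.2 hSlam)
  have h1 : F.rel b (fun v => w (Classical.arbitrary ι, v)) := hmain b hK1 _
  have h2 : F.rel b' (fun v => w (Classical.arbitrary ι, v)) := hmain b' hK1' _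
  exact F.equiv.trans h1 (F.equiv.symm h2)

end Key

/-- If `b_F ∈ bddᵘ(a_E)`, then there is an ultraimaginary `c_G`
of arity at most `|a|+|T|` in `bddᵘ(a_E)` which is interdefinable with `b_F` over
`∅`; moreover `c` can be taken to be an enumeration of any small model of size at
most `|a|+|T|` containing `a`. -/
theorem statement_4 (L : FirstOrder.Language.{u, u}) (M : Type u) [L.Structure M]
    (κbar : Cardinal.{u}) (_mon : Monster L M κbar)
    {α β : Type u} (hα : #α < κbar) (hβ : #β < κbar)
    (E : IER L M α) (a : α → M) (F : IER L M β) (b : β → M)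
    (hbdd : BddU L M κbar (autU L M E a) F b) :
    (∃ (γ : Type u) (_ : #γ ≤ #α + cardT L) (G : IER L M γ) (c : γ → M),
      autU L M G c = autU L M F b ∧ BddU L M κbar (autU L M E a) G c) ∧
    (∀ N : L.ElementarySubstructure M, Set.range a ⊆ (N : Set M) →
      #(N : Set M) ≤ #α + cardT L →
      ∃ G : IER L M ↥(N : Set M),
        autU L M G (Subtype.val : ↥(N : Set M) → M) = autU L M F b ∧
          BddU L M κbar (autU L M E a) G (Subtype.val : ↥(N : Set M) → M)) := by
  classical
  have hℵ : ℵ₀ ≤ κbar := _mon.aleph0_lt.le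
  have hκ' : #α + cardT L < κbar := Cardinal.add_lt_of_lt hℵ hα
    (Cardinal.add_lt_of_lt hℵ _mon.lang_lt _mon.aleph0_lt)
  have main : ∀ N : L.ElementarySubstructure M, Set.range a ⊆ (N : Set M) →
      #(N : Set M) ≤ #α + cardT L →
      ∃ G : IER L M ↥(N : Set M),
        autU L M G (Subtype.val : ↥(N : Set M) → M) = autU L M F b ∧
          BddU L M κbar (autU L M E a) G (Subtype.val : ↥(N : Set M) → M) := by
    intro N hsub hcard
    have hNκ : #(N : Set M) < κbar := lt_of_le_of_lt hcard hκ'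
    have key : ∀ σ : M ≃[L] M, (∀ x ∈ (N : Set M), σ x = x) → F.rel b (⇑σ ∘ b) :=
      fun σ hσ => keyLemma _mon hβ E a F b hbdd N hNκ hsub σ hσ
    have key2 : ∀ σ τ : M ≃[L] M, (∀ i : ↥(N : Set M), σ i.1 = τ i.1) →
        F.rel (⇑σ ∘ b) (⇑τ ∘ b) := by
      intro σ τ h
      have hfix : ∀ x ∈ (N : Set M), (σ.symm.comp τ) x = x := by
        intro x hx
        rw [Language.Equiv.comp_apply, (h ⟨x, hx⟩).symm, σ.symm_apply_apply]
      have h1 : F.rel b (⇑(σ.symm.comp τ) ∘ b) := key _ hfix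
      have h2 := F.rel_comp_auto σ h1
      have h3 : ⇑σ ∘ (⇑(σ.symm.comp τ) ∘ b) = ⇑τ ∘ b := by
        funext v
        show σ ((σ.symm.comp τ) (b v)) = τ (b v)
        rw [Language.Equiv.comp_apply, σ.apply_symm_apply]
      rwa [h3] at h2
    have hom1 : ∀ x : ↥(N : Set M) → M,
        SameType L M (Subtype.val : ↥(N : Set M) → M) x →
        ∃ σ : M ≃[L] M, ∀ i, σ (Subtype.val i) = x i :=
      fun x h => _mon.homog _ _ _ hNκ h
    have hom2 : ∀ x y x' y' : ↥(N : Set M) → M,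
        SameType L M (Sum.elim x y) (Sum.elim x' y') →
        ∃ σ : M ≃[L] M, (∀ i, σ (x i) = x' i) ∧ (∀ i, σ (y i) = y' i) := by
      intro x y x' y' h
      have hcard2 : #(↥(N : Set M) ⊕ ↥(N : Set M)) < κbar := by
        simp only [mk_sum, lift_id]
        exact Cardinal.add_lt_of_lt hℵ hNκ hNκ
      obtain ⟨σ, hσ⟩ := _mon.homog _ _ _ hcard2 h
      exact ⟨σ, fun i => hσ (Sum.inl i), fun i => hσ (Sum.inr i)⟩
    let R : (↥(N : Set M) → M) → (↥(N : Set M) → M) → Prop := fun x y =>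
      (SameType L M (Subtype.val : ↥(N : Set M) → M) x ∧
        SameType L M (Subtype.val : ↥(N : Set M) → M) y ∧
        ∃ σ τ : M ≃[L] M, (∀ i, σ (Subtype.val i) = x i) ∧
          (∀ i, τ (Subtype.val i) = y i) ∧ F.rel (⇑σ ∘ b) (⇑τ ∘ b)) ∨
      (¬SameType L M (Subtype.val : ↥(N : Set M) → M) x ∧
        ¬SameType L M (Subtype.val : ↥(N : Set M) → M) y ∧ SameType L M x y)
    have hR : ∀ x y, R x y ↔
      ((SameType L M (Subtype.val : ↥(N : Set M) → M) x ∧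
        SameType L M (Subtype.val : ↥(N : Set M) → M) y ∧
        ∃ σ τ : M ≃[L] M, (∀ i, σ (Subtype.val i) = x i) ∧
          (∀ i, τ (Subtype.val i) = y i) ∧ F.rel (⇑σ ∘ b) (⇑τ ∘ b)) ∨
      (¬SameType L M (Subtype.val : ↥(N : Set M) → M) x ∧
        ¬SameType L M (Subtype.val : ↥(N : Set M) → M) y ∧ SameType L M x y)) :=
      fun _ _ => Iff.rfl
    have hrefl : ∀ x, R x x := by
      intro x
      rw [hR]
      by_cases h : SameType L M (Subtype.val : ↥(N : Set M) → M) x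
      · obtain ⟨σ, hσ⟩ := hom1 x h
        exact Or.inl ⟨h, h, σ, σ, hσ, hσ, F.equiv.refl _⟩
      · exact Or.inr ⟨h, h, sameType_refl x⟩
    have hsymm : ∀ {x y}, R x y → R y x := by
      intro x y h
      rw [hR] at h ⊢
      rcases h with ⟨hx, hy, σ, τ, hσ, hτ, hF⟩ | ⟨hx, hy, hst⟩
      · exact Or.inl ⟨hy, hx, τ, σ, hτ, hσ, F.equiv.symm hF⟩
      · exact Or.inr ⟨hy, hx, hst.symm'⟩
    have htrans : ∀ {x y z}, R x y → R y z → R x z := by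
      intro x y z hxy hyz
      rw [hR] at hxy hyz ⊢
      rcases hxy with ⟨hx, hy, σ1, τ1, hσ1, hτ1, hF1⟩ | ⟨hx, hy, hst⟩
      · rcases hyz with ⟨hy2, hz, σ2, τ2, hσ2, hτ2, hF2⟩ | ⟨hy2, _, _⟩
        · refine Or.inl ⟨hx, hz, σ1, τ2, hσ1, hτ2, ?_⟩
          have hmid : F.rel (⇑τ1 ∘ b) (⇑σ2 ∘ b) :=
            key2 τ1 σ2 (fun i => (hτ1 i).trans (hσ2 i).symm)
          exact F.equiv.trans hF1 (F.equiv.trans hmid hF2)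
        · exact absurd hy hy2
      · rcases hyz with ⟨hy2, hz, hw⟩ | ⟨hy2, hz, hst2⟩
        · exact absurd hy2 hy
        · exact Or.inr ⟨hx, hz, hst.trans' hst2⟩
    have hdir : ∀ x y x' y' : ↥(N : Set M) → M,
        SameType L M (Sum.elim x y) (Sum.elim x' y') → R x y → R x' y' := by
      intro x y x' y' hst h
      have hxx' : SameType L M x x' := by
        have h2 := hst.comp (L := L) (M := M) Sum.inl
        rwa [Sum.elim_comp_inl, Sum.elim_comp_inl] at h2
      have hyy' : SameType L M y y' := by
        have h2 := hst.comp (L := L) (M := M) Sum.inr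
        rwa [Sum.elim_comp_inr, Sum.elim_comp_inr] at h2
      rw [hR] at h ⊢
      rcases h with ⟨hx, hy, σ, τ, hσ, hτ, hF⟩ | ⟨hx, hy, hstxy⟩
      · obtain ⟨ρ, hρx, hρy⟩ := hom2 x y x' y' hst
        refine Or.inl ⟨hx.trans' hxx', hy.trans' hyy', ρ.comp σ, ρ.comp τ, ?_, ?_, ?_⟩
        · intro i
          rw [Language.Equiv.comp_apply, hσ i]
          exact hρx i
        · intro i
          rw [Language.Equiv.comp_apply, hτ i]
          exact hρy i
        · have h2 := F.rel_comp_auto ρ hF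
          have hc1 : ⇑ρ ∘ (⇑σ ∘ b) = ⇑(ρ.comp σ) ∘ b := funext fun v =>
            (Language.Equiv.comp_apply ρ σ (b v)).symm
          have hc2 : ⇑ρ ∘ (⇑τ ∘ b) = ⇑(ρ.comp τ) ∘ b := funext fun v =>
            (Language.Equiv.comp_apply ρ τ (b v)).symm
          rwa [hc1, hc2] at h2
      · exact Or.inr ⟨fun hc => hx (hc.trans' hxx'.symm'),
          fun hc => hy (hc.trans' hyy'.symm'),
          (hxx'.symm').trans' (hstxy.trans' hyy')⟩
    refine ⟨⟨R, ⟨hrefl, hsymm, htrans⟩,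
      fun x y x' y' hst => ⟨hdir x y x' y' hst, hdir x' y' x y hst.symm'⟩⟩, ?_, ?_⟩
    · -- autU equality
      ext σ
      show R Subtype.val (⇑σ ∘ Subtype.val) ↔ F.rel b (⇑σ ∘ b)
      rw [hR]
      constructor
      · intro h
        rcases h with ⟨_, _, σ1, τ1, hσ1, hτ1, hF⟩ | ⟨hne, _, _⟩
        · have hKb : F.rel b (⇑σ1 ∘ b) := key σ1 (fun x hx => hσ1 ⟨x, hx⟩)
          have hKτ : F.rel (⇑τ1 ∘ b) (⇑σ ∘ b) := key2 τ1 σ (fun i => hτ1 i)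
          exact F.equiv.trans hKb (F.equiv.trans hF hKτ)
        · exact absurd (sameType_refl _) hne
      · intro h
        refine Or.inl ⟨sameType_refl _, sameType_auto σ _,
          Language.Equiv.refl L M, σ, fun i => rfl, fun i => rfl, ?_⟩
        have hre : ⇑(Language.Equiv.refl L M) ∘ b = b := funext fun v => rfl
        rwa [hre]
    · -- boundedness
      obtain ⟨S, hScard, hS⟩ := hbdd
      have hchoice : ∀ s : ↥{s : β → M | s ∈ S ∧ ∃ ρ : M ≃[L] M, F.rel (⇑ρ ∘ b) s},
          ∃ ρ : M ≃[L] M, F.rel (⇑ρ ∘ b) s.1 := fun s => s.2.2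
      choose ρfn hρfn using hchoice
      refine ⟨Set.range (fun s => ⇑(ρfn s) ∘ (Subtype.val : ↥(N : Set M) → M)), ?_, ?_⟩
      · exact lt_of_le_of_lt Cardinal.mk_range_le
          (lt_of_le_of_lt (Cardinal.mk_le_mk_of_subset (fun s hs => hs.1)) hScard)
      · intro σ hσ
        obtain ⟨s, hsS, hFs⟩ := hS σ hσ
        have hmem : s ∈ {s : β → M | s ∈ S ∧ ∃ ρ : M ≃[L] M, F.rel (⇑ρ ∘ b) s} :=
          ⟨hsS, σ, hFs⟩
        refine ⟨⇑(ρfn ⟨s, hmem⟩) ∘ Subtype.val, ⟨⟨s, hmem⟩, rfl⟩, ?_⟩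
        show R (⇑σ ∘ Subtype.val) (⇑(ρfn ⟨s, hmem⟩) ∘ Subtype.val)
        rw [hR]
        refine Or.inl ⟨sameType_auto σ _, sameType_auto _ _, σ, ρfn ⟨s, hmem⟩,
          fun i => rfl, fun i => rfl, ?_⟩
        exact F.equiv.trans hFs (F.equiv.symm (hρfn ⟨s, hmem⟩))
  refine ⟨?_, main⟩
  rcases le_total (#α + cardT L) (#M) with hle | hle
  · have h1 : ℵ₀ ≤ #α + cardT L := le_trans le_add_self (le_add_self)
    have h2 : #(Set.range a) ≤ #α + cardT L :=
      le_trans Cardinal.mk_range_le le_self_add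
    have h3 : L.card ≤ #α + cardT L := le_trans le_self_add le_add_self
    haveI : Nonempty M := Cardinal.mk_ne_zero_iff.1
      (ne_of_gt (lt_of_lt_of_le (lt_of_lt_of_le Cardinal.aleph0_pos h1) hle))
    obtain ⟨N, hsub, hcardN⟩ := Language.exists_elementarySubstructure_card_eq L
      (Set.range a) (#α + cardT L) h1 (by simpa using h2) (by simpa using h3)
      (by simpa using hle)
    rw [Cardinal.lift_id, Cardinal.lift_id] at hcardN
    obtain ⟨G, hG1, hG2⟩ := main N hsub (le_of_eq hcardN)
    exact ⟨↥(N : Set M), le_of_eq hcardN, G, Subtype.val, hG1, hG2⟩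
  · have hsub : Set.range a ⊆ ((⊤ : L.ElementarySubstructure M) : Set M) := by
      rw [Language.ElementarySubstructure.coe_top]
      exact Set.subset_univ _
    have hcard : #(((⊤ : L.ElementarySubstructure M) : Set M)) ≤ #α + cardT L := by
      rw [Language.ElementarySubstructure.coe_top, Cardinal.mk_univ]
      exact hle
    obtain ⟨G, hG1, hG2⟩ := main ⊤ hsub hcard
    exact ⟨↥((⊤ : L.ElementarySubstructure M) : Set M), hcard, G, Subtype.val, hG1, hG2⟩


end BddUltra
end

section
/- For any ultraimaginaries a_E, b_F, c_G, c'_G, the following are equivalent: (1) for every cardinal λ, there is an automorphism of 𝕄 fixing every element of dclᵘ_λ(a_E) ∩ dclᵘ_λ(b_F) and sending c_G to c'_G; (2) there is σ in the subgroup ⟨Aut(𝕄/a_E) ∪ Aut(𝕄/b_F)⟩ generated by Aut(𝕄/a_E) and Aut(𝕄/b_F) with σ·c_G = c'_G; (3) there is a finite sequence (aⁱbⁱcⁱ)_{i ≤ n} with a⁰ = a, b⁰ = b, c⁰ = c, cⁿ = c', such that for each i < n: if i is even then aⁱ = aⁱ⁺¹ and bⁱ_F cⁱ_G ≡_{aⁱ_E}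 bⁱ⁺¹_F cⁱ⁺¹_G, and if i is odd then bⁱ = bⁱ⁺¹ and aⁱ_E cⁱ_G ≡_{bⁱ_F} aⁱ⁺¹_E cⁱ⁺¹_G. -/
open FirstOrder Cardinal

universe u v w

namespace BddUltra

variable (L : FirstOrder.Language.{u, u}) (M : Type u) [L.Structure M]

section ProofAux

variable {L : FirstOrder.Language.{u, u}} {M : Type u} [L.Structure M]

lemma inv_apply_apply' (σ : M ≃[L] M) (x : M) : σ⁻¹ (σ x) = x :=
  σ.toEquiv.symm_apply_apply x

lemma apply_inv_apply' (σ : M ≃[L] M) (x : M) : σ (σ⁻¹ x) = x :=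
  σ.toEquiv.apply_symm_apply x

lemma sameType_comp_auto (σ : M ≃[L] M) {ι : Type v} (u : ι → M) :
    SameType L M u (⇑σ ∘ u) :=
  fun φ => (Language.StrongHomClass.realize_formula σ φ).symm

lemma rel_comp_iff {ι : Type u} (E : IER L M ι) (σ : M ≃[L] M) (u v : ι → M) :
    E.rel (⇑σ ∘ u) (⇑σ ∘ v) ↔ E.rel u v := by
  apply E.invariant
  have h : Sum.elim (⇑σ ∘ u) (⇑σ ∘ v) = ⇑σ ∘ Sum.elim u v := by
    funext i; cases i <;> rfl
  rw [h]
  intro φ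
  exact Language.StrongHomClass.realize_formula σ φ

lemma one_comp (u : ι → M) : ⇑(1 : M ≃[L] M) ∘ u = u := rfl

lemma mul_comp (σ τ : M ≃[L] M) (u : ι → M) : ⇑(σ * τ) ∘ u = ⇑σ ∘ (⇑τ ∘ u) := rfl

lemma inv_comp_comp (σ : M ≃[L] M) (u : ι → M) : ⇑σ⁻¹ ∘ (⇑σ ∘ u) = u := by
  funext i; exact inv_apply_apply' σ (u i)

lemma comp_inv_comp (σ : M ≃[L] M) (u : ι → M) : ⇑σ ∘ (⇑σ⁻¹ ∘ u) = u := by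
  funext i; exact apply_inv_apply' σ (u i)

lemma one_mem_autU {ι : Type u} (E : IER L M ι) (u : ι → M) :
    (1 : M ≃[L] M) ∈ autU L M E u :=
  E.equiv.refl u

lemma mul_mem_autU {ι : Type u} (E : IER L M ι) {u : ι → M} {σ τ : M ≃[L] M}
    (hσ : σ ∈ autU L M E u) (hτ : τ ∈ autU L M E u) : σ * τ ∈ autU L M E u :=
  E.equiv.trans hσ ((rel_comp_iff E σ u (⇑τ ∘ u)).2 hτ)

lemma inv_mem_autU {ι : Type u} (E : IER L M ι) {u : ι → M} {σ : M ≃[L] M}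
    (h : σ ∈ autU L M E u) : σ⁻¹ ∈ autU L M E u := by
  have h2 := (rel_comp_iff E σ⁻¹ u (⇑σ ∘ u)).2 h
  rw [inv_comp_comp] at h2
  exact E.equiv.symm h2

def autUSub {ι : Type u} (E : IER L M ι) (u : ι → M) : Subgroup (M ≃[L] M) where
  carrier := autU L M E u
  one_mem' := one_mem_autU E u
  mul_mem' := fun h h' => mul_mem_autU E h h'
  inv_mem' := fun h => inv_mem_autU E h

lemma autU_congr {ι : Type u} (E : IER L M ι) {u v : ι → M} (h : E.rel u v) :
    autU L M E u = autU L M E v := by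
  ext σ
  constructor <;> intro hσ
  · exact E.equiv.trans (E.equiv.symm h) (E.equiv.trans hσ ((rel_comp_iff E σ u v).2 h))
  · exact E.equiv.trans h (E.equiv.trans hσ ((rel_comp_iff E σ v u).2 (E.equiv.symm h)))

lemma mem_autU_comp {ι : Type u} (E : IER L M ι) (σ τ : M ≃[L] M) (u : ι → M) :
    τ ∈ autU L M E (⇑σ ∘ u) ↔ σ⁻¹ * τ * σ ∈ autU L M E u := by
  show E.rel (⇑σ ∘ u) (⇑τ ∘ (⇑σ ∘ u)) ↔ E.rel u (⇑(σ⁻¹ * τ * σ) ∘ u)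
  have e1 : ⇑(σ⁻¹ * τ * σ) ∘ u = ⇑σ⁻¹ ∘ (⇑τ ∘ (⇑σ ∘ u)) := rfl
  rw [e1]
  constructor
  · intro h
    have h2 := (rel_comp_iff E σ⁻¹ _ _).2 h
    rwa [inv_comp_comp] at h2
  · intro h
    have h2 := (rel_comp_iff E σ _ _).2 h
    rwa [comp_inv_comp] at h2

lemma rel_inv_shift {ι : Type u} (E : IER L M ι) {σ : M ≃[L] M} {u v : ι → M}
    (h : E.rel (⇑σ ∘ u) v) : E.rel (⇑σ⁻¹ ∘ v) u := by
  have h2 := (rel_comp_iff E σ⁻¹ _ _).2 h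
  rw [inv_comp_comp] at h2
  exact E.equiv.symm h2

end ProofAux

section ProofAux2

variable {L : FirstOrder.Language.{u, u}} {M : Type u} [L.Structure M]
variable {α β γ : Type u}

lemma conj_mem_closure_of {Gp : Type*} [Group Gp] {s t : Set Gp} {σ : Gp}
    (h : ∀ x ∈ s, σ * x * σ⁻¹ ∈ t) {τ : Gp} (hτ : τ ∈ Subgroup.closure s) :
    σ * τ * σ⁻¹ ∈ Subgroup.closure t := by
  induction hτ using Subgroup.closure_induction with
  | mem x hx => exact Subgroup.subset_closure (h x hx)
  | one => simpa using one_mem _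
  | mul x y hx hy px py =>
    have e : σ * (x * y) * σ⁻¹ = (σ * x * σ⁻¹) * (σ * y * σ⁻¹) := by group
    rw [e]; exact mul_mem px py
  | inv x hx px =>
    have e : σ * x⁻¹ * σ⁻¹ = (σ * x * σ⁻¹)⁻¹ := by group
    rw [e]; exact inv_mem px

lemma union_conj_mem (E : IER L M α) (F : IER L M β) {a a' : α → M} {b b' : β → M}
    {τ : M ≃[L] M} (ha : E.rel (⇑τ ∘ a) a') (hb : F.rel (⇑τ ∘ b) b') :
    ∀ x ∈ autU L M E a' ∪ autU L M F b', τ⁻¹ * x * τ ∈ autU L M E a ∪ autU L M F b := by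
  rintro x (hx | hx)
  · rw [← autU_congr E ha] at hx
    exact Or.inl ((mem_autU_comp E τ x a).1 hx)
  · rw [← autU_congr F hb] at hx
    exact Or.inr ((mem_autU_comp F τ x b).1 hx)

lemma union_conj_mem' (E : IER L M α) (F : IER L M β) {a a' : α → M} {b b' : β → M}
    {τ : M ≃[L] M} (ha : E.rel (⇑τ ∘ a) a') (hb : F.rel (⇑τ ∘ b) b') :
    ∀ x ∈ autU L M E a ∪ autU L M F b, τ * x * τ⁻¹ ∈ autU L M E a' ∪ autU L M F b' := by
  rintro x (hx | hx)
  · refine Or.inl ?_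
    rw [← autU_congr E ha]
    refine (mem_autU_comp E τ (τ * x * τ⁻¹) a).2 ?_
    have e : τ⁻¹ * (τ * x * τ⁻¹) * τ = x := by group
    rwa [e]
  · refine Or.inr ?_
    rw [← autU_congr F hb]
    refine (mem_autU_comp F τ (τ * x * τ⁻¹) b).2 ?_
    have e : τ⁻¹ * (τ * x * τ⁻¹) * τ = x := by group
    rwa [e]

lemma closure_trans_mem (E : IER L M α) (F : IER L M β) {a a' : α → M} {b b' : β → M}
    {τ τ' : M ≃[L] M}
    (hτ : τ ∈ Subgroup.closure (autU L M E a ∪ autU L M F b))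
    (ha : E.rel (⇑τ ∘ a) a') (hb : F.rel (⇑τ ∘ b) b')
    (hτ' : τ' ∈ Subgroup.closure (autU L M E a' ∪ autU L M F b')) :
    τ' * τ ∈ Subgroup.closure (autU L M E a ∪ autU L M F b) := by
  have h := conj_mem_closure_of (σ := τ⁻¹)
    (fun x hx => by rw [inv_inv]; exact union_conj_mem E F ha hb x hx) hτ'
  have e : τ' * τ = τ * (τ⁻¹ * τ' * τ⁻¹⁻¹) := by group
  rw [e]
  exact mul_mem hτ h

lemma closure_inv_mem (E : IER L M α) (F : IER L M β) {a a' : α → M} {b b' : β → M}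
    {τ : M ≃[L] M}
    (hτ : τ ∈ Subgroup.closure (autU L M E a ∪ autU L M F b))
    (ha : E.rel (⇑τ ∘ a) a') (hb : F.rel (⇑τ ∘ b) b') :
    τ⁻¹ ∈ Subgroup.closure (autU L M E a' ∪ autU L M F b') := by
  have h := conj_mem_closure_of (σ := τ) (union_conj_mem' E F ha hb) (inv_mem hτ)
  have e : τ * τ⁻¹ * τ⁻¹ = τ⁻¹ := by group
  rwa [e] at h

end ProofAux2

section ProofAux3

variable {L : FirstOrder.Language.{u, u}} {M : Type u} [L.Structure M]
variable {α β γ : Type u}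

/-- One crab-walk step (of either type). -/
def StepR (E : IER L M α) (F : IER L M β) (G : IER L M γ)
    (t t' : (α → M) × (β → M) × (γ → M)) : Prop :=
  (t'.1 = t.1 ∧ ∃ σ ∈ autU L M E t.1,
      F.rel (⇑σ ∘ t.2.1) t'.2.1 ∧ G.rel (⇑σ ∘ t.2.2) t'.2.2) ∨
  (t'.2.1 = t.2.1 ∧ ∃ σ ∈ autU L M F t.2.1,
      E.rel (⇑σ ∘ t.1) t'.1 ∧ G.rel (⇑σ ∘ t.2.2) t'.2.2)

/-- Action of an automorphism on a triple. -/
def actT (σ : M ≃[L] M) (t : (α → M) × (β → M) × (γ → M)) :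
    (α → M) × (β → M) × (γ → M) :=
  (⇑σ ∘ t.1, ⇑σ ∘ t.2.1, ⇑σ ∘ t.2.2)

lemma StepR.symm {E : IER L M α} {F : IER L M β} {G : IER L M γ}
    {t t' : (α → M) × (β → M) × (γ → M)} (h : StepR E F G t t') : StepR E F G t' t := by
  rcases h with ⟨h1, σ, hσ, hF, hG⟩ | ⟨h1, σ, hσ, hE, hG⟩
  · refine Or.inl ⟨h1.symm, σ⁻¹, ?_, rel_inv_shift F hF, rel_inv_shift G hG⟩
    rw [h1]
    exact inv_mem_autU E hσ
  · refine Or.inr ⟨h1.symm, σ⁻¹, ?_, rel_inv_shift E hE, rel_inv_shift G hG⟩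
    rw [h1]
    exact inv_mem_autU F hσ

lemma comp_conj (σ ρ : M ≃[L] M) {ι : Type u} (u : ι → M) :
    ⇑(σ * ρ * σ⁻¹) ∘ (⇑σ ∘ u) = ⇑σ ∘ (⇑ρ ∘ u) := by
  funext i
  show σ (ρ (σ⁻¹ (σ (u i)))) = σ (ρ (u i))
  rw [inv_apply_apply']

lemma mem_autU_conj {ι : Type u} (E : IER L M ι) {ρ : M ≃[L] M} (σ : M ≃[L] M)
    {u : ι → M} (h : ρ ∈ autU L M E u) : σ * ρ * σ⁻¹ ∈ autU L M E (⇑σ ∘ u) := by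
  refine (mem_autU_comp E σ _ u).2 ?_
  have e : σ⁻¹ * (σ * ρ * σ⁻¹) * σ = ρ := by group
  rwa [e]

lemma StepR.map {E : IER L M α} {F : IER L M β} {G : IER L M γ}
    {t t' : (α → M) × (β → M) × (γ → M)} (h : StepR E F G t t') (σ : M ≃[L] M) :
    StepR E F G (actT σ t) (actT σ t') := by
  rcases h with ⟨h1, ρ, hρ, hF, hG⟩ | ⟨h1, ρ, hρ, hE, hG⟩
  · refine Or.inl ⟨by rw [show (actT σ t').1 = ⇑σ ∘ t'.1 from rfl, h1]; rfl,
      σ * ρ * σ⁻¹, mem_autU_conj E σ hρ, ?_, ?_⟩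
    · show F.rel (⇑(σ * ρ * σ⁻¹) ∘ (⇑σ ∘ t.2.1)) (⇑σ ∘ t'.2.1)
      rw [comp_conj]
      exact (rel_comp_iff F σ _ _).2 hF
    · show G.rel (⇑(σ * ρ * σ⁻¹) ∘ (⇑σ ∘ t.2.2)) (⇑σ ∘ t'.2.2)
      rw [comp_conj]
      exact (rel_comp_iff G σ _ _).2 hG
  · refine Or.inr ⟨by rw [show (actT σ t').2.1 = ⇑σ ∘ t'.2.1 from rfl, h1]; rfl,
      σ * ρ * σ⁻¹, mem_autU_conj F σ hρ, ?_, ?_⟩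
    · show E.rel (⇑(σ * ρ * σ⁻¹) ∘ (⇑σ ∘ t.1)) (⇑σ ∘ t'.1)
      rw [comp_conj]
      exact (rel_comp_iff E σ _ _).2 hE
    · show G.rel (⇑(σ * ρ * σ⁻¹) ∘ (⇑σ ∘ t.2.2)) (⇑σ ∘ t'.2.2)
      rw [comp_conj]
      exact (rel_comp_iff G σ _ _).2 hG

/-- From a chain of crab-walk steps to an element of the generated subgroup. -/
lemma chain_closure (E : IER L M α) (F : IER L M β) (G : IER L M γ)
    {t t' : (α → M) × (β → M) × (γ → M)}
    (h : Relation.ReflTransGen (StepR E F G) t t') :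
    ∃ τ ∈ Subgroup.closure (autU L M E t.1 ∪ autU L M F t.2.1),
      E.rel (⇑τ ∘ t.1) t'.1 ∧ F.rel (⇑τ ∘ t.2.1) t'.2.1 ∧ G.rel (⇑τ ∘ t.2.2) t'.2.2 := by
  induction h with
  | refl => exact ⟨1, one_mem _, E.equiv.refl _, F.equiv.refl _, G.equiv.refl _⟩
  | @tail mid fin hc hstep ih =>
    obtain ⟨τ, hτ, hE, hF, hG⟩ := ih
    rcases hstep with ⟨h1, σ, hσ, hF2, hG2⟩ | ⟨h1, σ, hσ, hE2, hG2⟩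
    · refine ⟨σ * τ, closure_trans_mem E F hτ hE hF
        (Subgroup.subset_closure (Or.inl hσ)), ?_, ?_, ?_⟩
      · rw [h1, mul_comp]
        exact E.equiv.trans ((rel_comp_iff E σ _ _).2 hE) (E.equiv.symm hσ)
      · rw [mul_comp]
        exact F.equiv.trans ((rel_comp_iff F σ _ _).2 hF) hF2
      · rw [mul_comp]
        exact G.equiv.trans ((rel_comp_iff G σ _ _).2 hG) hG2
    · refine ⟨σ * τ, closure_trans_mem E F hτ hE hF
        (Subgroup.subset_closure (Or.inr hσ)), ?_, ?_, ?_⟩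
      · rw [mul_comp]
        exact E.equiv.trans ((rel_comp_iff E σ _ _).2 hE) hE2
      · rw [h1, mul_comp]
        exact F.equiv.trans ((rel_comp_iff F σ _ _).2 hF) (F.equiv.symm hσ)
      · rw [mul_comp]
        exact G.equiv.trans ((rel_comp_iff G σ _ _).2 hG) hG2

/-- From an element of the generated subgroup to a chain of crab-walk steps. -/
lemma closure_chain (E : IER L M α) (F : IER L M β) (G : IER L M γ)
    (a : α → M) (b : β → M) (c : γ → M) {σ : M ≃[L] M}
    (h : σ ∈ Subgroup.closure (autU L M E a ∪ autU L M F b)) :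
    Relation.ReflTransGen (StepR E F G) (a, b, c) (⇑σ ∘ a, ⇑σ ∘ b, ⇑σ ∘ c) := by
  induction h using Subgroup.closure_induction with
  | one => exact Relation.ReflTransGen.refl
  | mem σ hσ =>
    rcases hσ with hσ | hσ
    · refine Relation.ReflTransGen.tail (b := (a, ⇑σ ∘ b, ⇑σ ∘ c))
        (Relation.ReflTransGen.single ?_) ?_
      · exact Or.inl ⟨rfl, σ, hσ, F.equiv.refl _, G.equiv.refl _⟩
      · exact Or.inr ⟨rfl, 1, one_mem_autU F _, hσ, G.equiv.refl _⟩
    · refine Relation.ReflTransGen.tail (b := (⇑σ ∘ a, b, ⇑σ ∘ c))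
        (Relation.ReflTransGen.single ?_) ?_
      · exact Or.inr ⟨rfl, σ, hσ, E.equiv.refl _, G.equiv.refl _⟩
      · exact Or.inl ⟨rfl, 1, one_mem_autU E _, hσ, G.equiv.refl _⟩
  | mul σ τ _ _ pσ pτ =>
    refine Relation.ReflTransGen.trans pσ ?_
    exact Relation.ReflTransGen.lift (actT σ) (fun x y (h : StepR E F G x y) => h.map σ) _ _ pτ
  | inv σ _ pσ =>
    have h1 : Relation.ReflTransGen (StepR E F G) (actT σ⁻¹ (a, b, c)) (actT σ⁻¹ ((⇑σ ∘ a, ⇑σ ∘ b, ⇑σ ∘ c) : (α → M) × (β → M) × (γ → M))) := Relation.ReflTransGen.lift (actT σ⁻¹) (fun x y (h : StepR E F G x y) => h.map σ⁻¹) _ _ pσ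
    have e : actT σ⁻¹ ((⇑σ ∘ a, ⇑σ ∘ b, ⇑σ ∘ c) : (α → M) × (β → M) × (γ → M))
        = (a, b, c) := by
      show (⇑σ⁻¹ ∘ (⇑σ ∘ a), ⇑σ⁻¹ ∘ (⇑σ ∘ b), ⇑σ⁻¹ ∘ (⇑σ ∘ c)) = (a, b, c)
      rw [inv_comp_comp, inv_comp_comp, inv_comp_comp]
    rw [e] at h1
    exact (@Relation.ReflTransGen.symmetric _ _ ⟨fun x y (h : StepR E F G x y) => h.symm⟩).symm _ _ h1

end ProofAux3

section ProofAux4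

variable {L : FirstOrder.Language.{u, u}} {M : Type u} [L.Structure M]
variable {α β γ : Type u}

/-- The step condition of the indexed crab-walk at index `i`. -/
def WalkCond (E : IER L M α) (F : IER L M β) (G : IER L M γ)
    (as : ℕ → α → M) (bs : ℕ → β → M) (cs : ℕ → γ → M) (i : ℕ) : Prop :=
  (Even i → as (i + 1) = as i ∧
    ∃ σ ∈ autU L M E (as i),
      F.rel (⇑σ ∘ bs i) (bs (i + 1)) ∧ G.rel (⇑σ ∘ cs i) (cs (i + 1))) ∧
  (¬ Even i → bs (i + 1) = bs i ∧
    ∃ σ ∈ autU L M F (bs i),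
      E.rel (⇑σ ∘ as i) (as (i + 1)) ∧ G.rel (⇑σ ∘ cs i) (cs (i + 1)))

lemma walk_chain (E : IER L M α) (F : IER L M β) (G : IER L M γ)
    (n : ℕ) (as : ℕ → α → M) (bs : ℕ → β → M) (cs : ℕ → γ → M)
    (h : ∀ i < n, WalkCond E F G as bs cs i) :
    Relation.ReflTransGen (StepR E F G) (as 0, bs 0, cs 0) (as n, bs n, cs n) := by
  have key : ∀ m, m ≤ n →
      Relation.ReflTransGen (StepR E F G) (as 0, bs 0, cs 0) (as m, bs m, cs m) := by
    intro m
    induction m with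
    | zero => intro _; exact Relation.ReflTransGen.refl
    | succ k ih =>
      intro hk
      have hkn : k < n := Nat.lt_of_succ_le hk
      refine Relation.ReflTransGen.tail (ih (le_of_lt hkn)) ?_
      by_cases he : Even k
      · obtain ⟨h1, σ, hσ, hF, hG⟩ := (h k hkn).1 he
        exact Or.inl ⟨h1, σ, hσ, hF, hG⟩
      · obtain ⟨h1, σ, hσ, hE, hG⟩ := (h k hkn).2 he
        exact Or.inr ⟨h1, σ, hσ, hE, hG⟩
  exact key n le_rfl

/-- Append one step to an indexed walk. -/
lemma walk_snoc {E : IER L M α} {F : IER L M β} {G : IER L M γ}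
    {n : ℕ} {as : ℕ → α → M} {bs : ℕ → β → M} {cs : ℕ → γ → M}
    (h : ∀ i < n, WalkCond E F G as bs cs i)
    (a' : α → M) (b' : β → M) (c' : γ → M)
    (hstep : (Even n → a' = as n ∧ ∃ σ ∈ autU L M E (as n),
        F.rel (⇑σ ∘ bs n) b' ∧ G.rel (⇑σ ∘ cs n) c') ∧
      (¬ Even n → b' = bs n ∧ ∃ σ ∈ autU L M F (bs n),
        E.rel (⇑σ ∘ as n) a' ∧ G.rel (⇑σ ∘ cs n) c')) :
    ∃ (as' : ℕ → α → M) (bs' : ℕ → β → M) (cs' : ℕ → γ → M),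
      as' 0 = as 0 ∧ bs' 0 = bs 0 ∧ cs' 0 = cs 0 ∧
      as' (n + 1) = a' ∧ bs' (n + 1) = b' ∧ cs' (n + 1) = c' ∧
      ∀ i < n + 1, WalkCond E F G as' bs' cs' i := by
  refine ⟨fun i => if i ≤ n then as i else a', fun i => if i ≤ n then bs i else b',
    fun i => if i ≤ n then cs i else c', ?_, ?_, ?_, ?_, ?_, ?_, ?_⟩
  · simp [Nat.zero_le]
  · simp [Nat.zero_le]
  · simp [Nat.zero_le]
  · simp
  · simp
  · simp
  · intro i hi
    rcases Nat.lt_or_ge i n with hin | hin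
    · have e1 : i ≤ n := le_of_lt hin
      have e2 : i + 1 ≤ n := hin
      constructor
      · intro he
        obtain ⟨h1, σ, hσ, hF, hG⟩ := (h i hin).1 he
        simp only [if_pos e1, if_pos e2]
        exact ⟨h1, σ, hσ, hF, hG⟩
      · intro he
        obtain ⟨h1, σ, hσ, hE, hG⟩ := (h i hin).2 he
        simp only [if_pos e1, if_pos e2]
        exact ⟨h1, σ, hσ, hE, hG⟩
    · have hin' : i = n := by omega
      subst hin'
      have e1 : i ≤ i := le_rfl
      have e2 : ¬ (i + 1 ≤ i) := by omega
      constructor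
      · intro he
        obtain ⟨h1, σ, hσ, hF, hG⟩ := hstep.1 he
        simp only [if_pos e1, if_neg e2]
        exact ⟨h1, σ, hσ, hF, hG⟩
      · intro he
        obtain ⟨h1, σ, hσ, hE, hG⟩ := hstep.2 he
        simp only [if_pos e1, if_neg e2]
        exact ⟨h1, σ, hσ, hE, hG⟩

/-- Append a trivial (identity) step to an indexed walk. -/
lemma walk_snoc_trivial {E : IER L M α} {F : IER L M β} {G : IER L M γ}
    {n : ℕ} {as : ℕ → α → M} {bs : ℕ → β → M} {cs : ℕ → γ → M}
    (h : ∀ i < n, WalkCond E F G as bs cs i) :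
    ∃ (as' : ℕ → α → M) (bs' : ℕ → β → M) (cs' : ℕ → γ → M),
      as' 0 = as 0 ∧ bs' 0 = bs 0 ∧ cs' 0 = cs 0 ∧
      as' (n + 1) = as n ∧ bs' (n + 1) = bs n ∧ cs' (n + 1) = cs n ∧
      ∀ i < n + 1, WalkCond E F G as' bs' cs' i :=
  walk_snoc h (as n) (bs n) (cs n)
    ⟨fun _ => ⟨rfl, 1, one_mem_autU E _, F.equiv.refl _, G.equiv.refl _⟩,
     fun _ => ⟨rfl, 1, one_mem_autU F _, E.equiv.refl _, G.equiv.refl _⟩⟩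

/-- Convert a chain of crab-walk steps into an indexed walk. -/
lemma chain_walk (E : IER L M α) (F : IER L M β) (G : IER L M γ)
    {t t' : (α → M) × (β → M) × (γ → M)}
    (h : Relation.ReflTransGen (StepR E F G) t t') :
    ∃ (n : ℕ) (as : ℕ → α → M) (bs : ℕ → β → M) (cs : ℕ → γ → M),
      as 0 = t.1 ∧ bs 0 = t.2.1 ∧ cs 0 = t.2.2 ∧
      as n = t'.1 ∧ bs n = t'.2.1 ∧ cs n = t'.2.2 ∧
      ∀ i < n, WalkCond E F G as bs cs i := by
  induction h with
  | refl =>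
    exact ⟨0, fun _ => t.1, fun _ => t.2.1, fun _ => t.2.2, rfl, rfl, rfl, rfl, rfl, rfl,
      fun i hi => absurd hi (Nat.not_lt_zero i)⟩
  | @tail mid fin hc hstep ih =>
    obtain ⟨n, as, bs, cs, h0a, h0b, h0c, hna, hnb, hnc, hw⟩ := ih
    -- possibly insert a trivial step to fix parity
    rcases hstep with ⟨h1, σ, hσ, hF, hG⟩ | ⟨h1, σ, hσ, hE, hG⟩
    · -- even-type step; ensure index is even
      obtain ⟨m, as', bs', cs', g0a, g0b, g0c, gma, gmb, gmc, gw, hm⟩ :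
          ∃ (m : ℕ) (as' : ℕ → α → M) (bs' : ℕ → β → M) (cs' : ℕ → γ → M),
            as' 0 = t.1 ∧ bs' 0 = t.2.1 ∧ cs' 0 = t.2.2 ∧
            as' m = mid.1 ∧ bs' m = mid.2.1 ∧ cs' m = mid.2.2 ∧
            (∀ i < m, WalkCond E F G as' bs' cs' i) ∧ Even m := by
        by_cases he : Even n
        · exact ⟨n, as, bs, cs, h0a, h0b, h0c, hna, hnb, hnc, hw, he⟩
        · obtain ⟨as', bs', cs', g0a, g0b, g0c, gma, gmb, gmc, gw⟩ := walk_snoc_trivial hw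
          exact ⟨n + 1, as', bs', cs', g0a.trans h0a, g0b.trans h0b, g0c.trans h0c,
            gma.trans hna, gmb.trans hnb, gmc.trans hnc, gw, Nat.even_add_one.2 he⟩
      obtain ⟨as'', bs'', cs'', f0a, f0b, f0c, fma, fmb, fmc, fw⟩ :=
        walk_snoc gw fin.1 fin.2.1 fin.2.2
          ⟨fun _ => ⟨by rw [gma]; exact h1, σ, by rw [gma]; exact hσ,
            by rw [gmb]; exact hF, by rw [gmc]; exact hG⟩,
           fun hne => absurd hm hne⟩
      exact ⟨m + 1, as'', bs'', cs'', f0a.trans g0a, f0b.trans g0b, f0c.trans g0c,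
        fma, fmb, fmc, fw⟩
    · -- odd-type step; ensure index is odd
      obtain ⟨m, as', bs', cs', g0a, g0b, g0c, gma, gmb, gmc, gw, hm⟩ :
          ∃ (m : ℕ) (as' : ℕ → α → M) (bs' : ℕ → β → M) (cs' : ℕ → γ → M),
            as' 0 = t.1 ∧ bs' 0 = t.2.1 ∧ cs' 0 = t.2.2 ∧
            as' m = mid.1 ∧ bs' m = mid.2.1 ∧ cs' m = mid.2.2 ∧
            (∀ i < m, WalkCond E F G as' bs' cs' i) ∧ ¬ Even m := by
        by_cases he : Even n
        · obtain ⟨as', bs', cs', g0a, g0b, g0c, gma, gmb, gmc, gw⟩ := walk_snoc_trivial hw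
          refine ⟨n + 1, as', bs', cs', g0a.trans h0a, g0b.trans h0b, g0c.trans h0c,
            gma.trans hna, gmb.trans hnb, gmc.trans hnc, gw, ?_⟩
          rw [Nat.even_add_one]
          exact not_not_intro he
        · exact ⟨n, as, bs, cs, h0a, h0b, h0c, hna, hnb, hnc, hw, he⟩
      obtain ⟨as'', bs'', cs'', f0a, f0b, f0c, fma, fmb, fmc, fw⟩ :=
        walk_snoc gw fin.1 fin.2.1 fin.2.2
          ⟨fun he => absurd he hm,
           fun _ => ⟨by rw [gmb]; exact h1, σ, by rw [gmb]; exact hσ,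
            by rw [gma]; exact hE, by rw [gmc]; exact hG⟩⟩
      exact ⟨m + 1, as'', bs'', cs'', f0a.trans g0a, f0b.trans g0b, f0c.trans g0c,
        fma, fmb, fmc, fw⟩

end ProofAux4

section ProofAux5

variable {L : FirstOrder.Language.{u, u}} {M : Type u} [L.Structure M]
variable {α β γ : Type u}

/-- The joint relation: `y` is reachable from `x` by an element of the subgroup
generated by the pointwise-class stabilizers of the first two coordinates of `x`. -/
def JRel (E : IER L M α) (F : IER L M β) (G : IER L M γ)
    (x y : ((α ⊕ β) ⊕ γ) → M) : Prop :=
  ∃ τ ∈ Subgroup.closure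
      (autU L M E (x ∘ Sum.inl ∘ Sum.inl) ∪ autU L M F (x ∘ Sum.inl ∘ Sum.inr)),
    E.rel (⇑τ ∘ (x ∘ Sum.inl ∘ Sum.inl)) (y ∘ Sum.inl ∘ Sum.inl) ∧
    F.rel (⇑τ ∘ (x ∘ Sum.inl ∘ Sum.inr)) (y ∘ Sum.inl ∘ Sum.inr) ∧
    G.rel (⇑τ ∘ (x ∘ Sum.inr)) (y ∘ Sum.inr)

lemma JRel.refl (E : IER L M α) (F : IER L M β) (G : IER L M γ)
    (x : ((α ⊕ β) ⊕ γ) → M) : JRel E F G x x :=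
  ⟨1, one_mem _, E.equiv.refl _, F.equiv.refl _, G.equiv.refl _⟩

lemma JRel.symm {E : IER L M α} {F : IER L M β} {G : IER L M γ}
    {x y : ((α ⊕ β) ⊕ γ) → M} (h : JRel E F G x y) : JRel E F G y x := by
  obtain ⟨τ, hτ, hE, hF, hG⟩ := h
  exact ⟨τ⁻¹, closure_inv_mem E F hτ hE hF,
    rel_inv_shift E hE, rel_inv_shift F hF, rel_inv_shift G hG⟩

lemma JRel.trans {E : IER L M α} {F : IER L M β} {G : IER L M γ}
    {x y z : ((α ⊕ β) ⊕ γ) → M} (h : JRel E F G x y) (h' : JRel E F G y z) :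
    JRel E F G x z := by
  obtain ⟨τ, hτ, hE, hF, hG⟩ := h
  obtain ⟨τ', hτ', hE', hF', hG'⟩ := h'
  refine ⟨τ' * τ, closure_trans_mem E F hτ hE hF hτ', ?_, ?_, ?_⟩
  · rw [mul_comp]
    exact E.equiv.trans ((rel_comp_iff E τ' _ _).2 hE) hE'
  · rw [mul_comp]
    exact F.equiv.trans ((rel_comp_iff F τ' _ _).2 hF) hF'
  · rw [mul_comp]
    exact G.equiv.trans ((rel_comp_iff G τ' _ _).2 hG) hG'

lemma JRel.map {E : IER L M α} {F : IER L M β} {G : IER L M γ}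
    {x y : ((α ⊕ β) ⊕ γ) → M} (h : JRel E F G x y) (σ : M ≃[L] M) :
    JRel E F G (⇑σ ∘ x) (⇑σ ∘ y) := by
  obtain ⟨τ, hτ, hE, hF, hG⟩ := h
  refine ⟨σ * τ * σ⁻¹, ?_, ?_, ?_, ?_⟩
  · exact conj_mem_closure_of
      (fun ρ hρ => hρ.elim (fun hρ => Or.inl (mem_autU_conj E σ hρ))
        (fun hρ => Or.inr (mem_autU_conj F σ hρ))) hτ
  · show E.rel (⇑(σ * τ * σ⁻¹) ∘ (⇑σ ∘ (x ∘ Sum.inl ∘ Sum.inl)))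
      (⇑σ ∘ (y ∘ Sum.inl ∘ Sum.inl))
    rw [comp_conj]
    exact (rel_comp_iff E σ _ _).2 hE
  · show F.rel (⇑(σ * τ * σ⁻¹) ∘ (⇑σ ∘ (x ∘ Sum.inl ∘ Sum.inr)))
      (⇑σ ∘ (y ∘ Sum.inl ∘ Sum.inr))
    rw [comp_conj]
    exact (rel_comp_iff F σ _ _).2 hF
  · show G.rel (⇑(σ * τ * σ⁻¹) ∘ (⇑σ ∘ (x ∘ Sum.inr))) (⇑σ ∘ (y ∘ Sum.inr))
    rw [comp_conj]
    exact (rel_comp_iff G σ _ _).2 hG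

/-- The joint invariant equivalence relation, given enough homogeneity. -/
def jointIER (E : IER L M α) (F : IER L M β) (G : IER L M γ)
    (hom : ∀ u v : ((((α ⊕ β) ⊕ γ) ⊕ ((α ⊕ β) ⊕ γ)) → M), SameType L M u v →
      ∃ σ : M ≃[L] M, ∀ i, σ (u i) = v i) : IER L M ((α ⊕ β) ⊕ γ) where
  rel := JRel E F G
  equiv := ⟨JRel.refl E F G, JRel.symm, JRel.trans⟩
  invariant := by
    intro x y x' y' h
    obtain ⟨σ, hσ⟩ := hom (Sum.elim x y) (Sum.elim x' y') h
    have hx : ⇑σ ∘ x = x' := funext fun j => hσ (Sum.inl j)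
    have hy : ⇑σ ∘ y = y' := funext fun j => hσ (Sum.inr j)
    constructor
    · intro hxy
      rw [← hx, ← hy]
      exact hxy.map σ
    · intro hxy
      have h2 := hxy.map σ⁻¹
      rw [← hx, ← hy, inv_comp_comp, inv_comp_comp] at h2
      exact h2

end ProofAux5

/-- For ultraimaginaries `a_E`, `b_F`, `c_G`, `c'_G` the following
are equivalent: (1) for every cardinal `λ` there is an automorphism fixing every
element of `dclᵘ_λ(a_E) ∩ dclᵘ_λ(b_F)` and sending `c_G` to `c'_G`; (2) some
`σ ∈ ⟨Aut(𝕄/a_E) ∪ Aut(𝕄/b_F)⟩` sends `c_G` to `c'_G`; (3) there is a finite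
crab-walk from `c` to `c'` alternately conjugating over `a_E` and over `b_F`. -/
theorem statement_5 (L : FirstOrder.Language.{u, u}) (M : Type u) [L.Structure M]
    (κbar : Cardinal.{u}) (_mon : Monster L M κbar)
    {α β γ : Type u} (hα : #α < κbar) (hβ : #β < κbar) (hγ : #γ < κbar)
    (E : IER L M α) (a : α → M) (F : IER L M β) (b : β → M)
    (G : IER L M γ) (c c' : γ → M) :
    ((∀ lam : Cardinal.{u}, ∃ σ : M ≃[L] M,
        (∀ (δ : Type u), #δ ≤ lam → ∀ (H : IER L M δ) (d : δ → M),
          autU L M E a ⊆ autU L M H d → autU L M F b ⊆ autU L M H d →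
            H.rel d (⇑σ ∘ d)) ∧
        G.rel (⇑σ ∘ c) c') ↔
      (∃ σ ∈ Subgroup.closure (autU L M E a ∪ autU L M F b), G.rel (⇑σ ∘ c) c')) ∧
    ((∃ σ ∈ Subgroup.closure (autU L M E a ∪ autU L M F b), G.rel (⇑σ ∘ c) c') ↔
      (∃ (n : ℕ) (as : ℕ → α → M) (bs : ℕ → β → M) (cs : ℕ → γ → M),
        as 0 = a ∧ bs 0 = b ∧ cs 0 = c ∧ cs n = c' ∧
        ∀ i < n,
          (Even i → as (i + 1) = as i ∧
            ∃ σ ∈ autU L M E (as i),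
              F.rel (⇑σ ∘ bs i) (bs (i + 1)) ∧ G.rel (⇑σ ∘ cs i) (cs (i + 1))) ∧
          (¬ Even i → bs (i + 1) = bs i ∧
            ∃ σ ∈ autU L M F (bs i),
              E.rel (⇑σ ∘ as i) (as (i + 1)) ∧ G.rel (⇑σ ∘ cs i) (cs (i + 1))))) := by
  constructor
  · constructor
    · -- (1) → (2)
      intro h1
      have hab : #(α ⊕ β) < κbar := by
        rw [Cardinal.mk_sum]; simp only [Cardinal.lift_id]
        exact Cardinal.add_lt_of_lt _mon.isRegular.aleph0_le hα hβ
      have habg : #((α ⊕ β) ⊕ γ) < κbar := by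
        rw [Cardinal.mk_sum]; simp only [Cardinal.lift_id]
        exact Cardinal.add_lt_of_lt _mon.isRegular.aleph0_le hab hγ
      have hδδ : #((((α ⊕ β) ⊕ γ) ⊕ ((α ⊕ β) ⊕ γ)) : Type u) < κbar := by
        rw [Cardinal.mk_sum]; simp only [Cardinal.lift_id]
        exact Cardinal.add_lt_of_lt _mon.isRegular.aleph0_le habg habg
      obtain ⟨σ, hfix, hG⟩ := h1 (#((α ⊕ β) ⊕ γ))
      let H : IER L M ((α ⊕ β) ⊕ γ) :=
        jointIER E F G (fun u v h => _mon.homog _ u v hδδ h)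
      let d : ((α ⊕ β) ⊕ γ) → M := Sum.elim (Sum.elim a b) c
      have hsub1 : autU L M E a ⊆ autU L M H d := by
        intro σ' hσ'
        exact ⟨σ', Subgroup.subset_closure (Or.inl hσ'),
          E.equiv.refl _, F.equiv.refl _, G.equiv.refl _⟩
      have hsub2 : autU L M F b ⊆ autU L M H d := by
        intro σ' hσ'
        exact ⟨σ', Subgroup.subset_closure (Or.inr hσ'),
          E.equiv.refl _, F.equiv.refl _, G.equiv.refl _⟩
      have hJ : H.rel d (⇑σ ∘ d) := hfix ((α ⊕ β) ⊕ γ) le_rfl H d hsub1 hsub2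
      obtain ⟨τ, hτ, -, -, hGc⟩ := hJ
      exact ⟨τ, hτ, G.equiv.trans hGc hG⟩
    · -- (2) → (1)
      rintro ⟨σ, hσc, hσG⟩ lam
      refine ⟨σ, ?_, hσG⟩
      intro δ _ H d h1 h2
      have hle : Subgroup.closure (autU L M E a ∪ autU L M F b) ≤ autUSub H d :=
        (Subgroup.closure_le _).2 (Set.union_subset h1 h2)
      exact hle hσc
  · constructor
    · -- (2) → (3)
      rintro ⟨σ, hσ, hG⟩
      have hchain := closure_chain E F G a b c hσ
      have hstep : StepR E F G (⇑σ ∘ a, ⇑σ ∘ b, ⇑σ ∘ c) (⇑σ ∘ a, ⇑σ ∘ b, c') :=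
        Or.inl ⟨rfl, 1, one_mem_autU E _, F.equiv.refl _, hG⟩
      obtain ⟨n, as, bs, cs, h0a, h0b, h0c, _, _, hnc, hw⟩ :=
        chain_walk E F G (hchain.tail hstep)
      exact ⟨n, as, bs, cs, h0a, h0b, h0c, hnc, hw⟩
    · -- (3) → (2)
      rintro ⟨n, as, bs, cs, h0a, h0b, h0c, hnc, hw⟩
      have hchain := walk_chain E F G n as bs cs hw
      rw [h0a, h0b, h0c] at hchain
      obtain ⟨τ, hτ, _, _, hGc⟩ := chain_closure E F G hchain
      refine ⟨τ, hτ, ?_⟩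
      rw [← hnc]
      exact hGc


end BddUltra
end

section
/- For any co-small groups G, H ≤ Aut(𝕄), letting ⟨G⟩ denote any ultraimaginary a_E with Aut(𝕄/a_E) = G (and similarly ⟨H⟩), one has ⟨G⟩ ∈ bddᵘ(⟨H⟩) if and only if G ⊇ H_f. -/
open FirstOrder Cardinal

universe u v w

namespace BddUltra

variable (L : FirstOrder.Language.{u, u}) (M : Type u) [L.Structure M]

section AuxProofs

open Set Function

variable {γ : Type u}

theorem coe_mul_fun (f g : M ≃[L] M) : ⇑(f * g) = ⇑f ∘ ⇑g := rfl

theorem coe_inv_fun (f : M ≃[L] M) : ⇑(f⁻¹) = ⇑(f.symm) := rfl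

theorem sameType_comp_equiv (f : M ≃[L] M) (x : γ → M) :
    SameType L M x (⇑f ∘ x) := fun φ => (Language.StrongHomClass.realize_formula f φ).symm

theorem realize_congr_var [DecidableEq γ] (φ : L.Formula γ) {v w : γ → M}
    (h : ∀ x ∈ φ.freeVarFinset, v x = w x) : φ.Realize v ↔ φ.Realize w := by
  have h1 := Language.BoundedFormula.realize_restrictFreeVar' (φ := φ)
    (subset_refl (↑φ.freeVarFinset : Set γ)) (v := v) (xs := (default : Fin 0 → M))
  have h2 := Language.BoundedFormula.realize_restrictFreeVar' (φ := φ)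
    (subset_refl (↑φ.freeVarFinset : Set γ)) (v := w) (xs := (default : Fin 0 → M))
  have he : v ∘ ((↑) : (↑φ.freeVarFinset : Set γ) → γ) = w ∘ (↑) :=
    funext fun x => h x.1 (Finset.mem_coe.mp x.2)
  unfold Language.Formula.Realize
  rw [← h1, ← h2, he]

theorem exists_realize_sub [Nonempty M] (N : L.ElementarySubstructure M)
    (ψ : L.Formula (↥N ⊕ γ)) (a : γ → M)
    (hψ : ψ.Realize (Sum.elim Subtype.val a)) :
    ∃ n : γ → ↥N, ψ.Realize (Sum.elim Subtype.val (Subtype.val ∘ n)) := by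
  classical
  obtain ⟨n₀⟩ : Nonempty ↥N := inferInstance
  set t : Finset γ := ψ.freeVarFinset.preimage Sum.inr Sum.inr_injective.injOn with htdef
  set f : (↥N ⊕ γ) → (↥N ⊕ ↥t) :=
    Sum.elim Sum.inl (fun x => if h : x ∈ t then Sum.inr ⟨x, h⟩ else Sum.inl n₀) with hfdef
  have h1 : ((ψ.relabel f).iExs ↥t).Realize (Subtype.val : ↥N → M) := by
    rw [Language.Formula.realize_iExs]
    simp only [Language.Formula.realize_relabel]
    refine ⟨fun x => a x.1, ?_⟩
    refine (realize_congr_var L M ψ (w := fun z => Sum.elim Subtype.val (fun x : ↥t => a x.1) (f z)) ?_).mp hψ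
    intro z hz
    rcases z with m | x
    · rfl
    · have hxt : x ∈ t := by rw [htdef]; exact Finset.mem_preimage.mpr hz
      show a x = Sum.elim Subtype.val (fun x : ↥t => a x.1) (f (Sum.inr x))
      rw [hfdef]; simp [dif_pos hxt]
  have h2 : ((ψ.relabel f).iExs ↥t).Realize (id : ↥N → ↥N) := by
    have h3 := N.subtype.map_formula ((ψ.relabel f).iExs ↥t) (id : ↥N → ↥N)
    exact h3.mp h1
  rw [Language.Formula.realize_iExs] at h2
  simp only [Language.Formula.realize_relabel] at h2
  obtain ⟨i, hi⟩ := h2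
  refine ⟨fun x => if h : x ∈ t then i ⟨x, h⟩ else n₀, ?_⟩
  have h4 := (N.subtype.map_formula ψ (fun z => Sum.elim (id : ↥N → ↥N) i (f z))).mpr hi
  have he : (⇑N.subtype ∘ fun z => Sum.elim (id : ↥N → ↥N) i (f z)) =
      Sum.elim (Subtype.val : ↥N → M)
        (Subtype.val ∘ fun x => if h : x ∈ t then i ⟨x, h⟩ else n₀) := by
    funext z
    rcases z with m | x
    · rfl
    · by_cases hxt : x ∈ t
      · show (N.subtype) (Sum.elim (id : ↥N → ↥N) i (f (Sum.inr x))) = _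
        rw [hfdef]; simp [dif_pos hxt]
      · show (N.subtype) (Sum.elim (id : ↥N → ↥N) i (f (Sum.inr x))) = _
        rw [hfdef]; simp [dif_neg hxt]
  rw [he] at h4
  exact h4

theorem formula_card_lt {κbar : Cardinal.{u}} (mon : Monster L M κbar)
    (hγ : #γ < κbar) : #(L.Formula γ) < κbar := by
  have h1 : #(L.Formula γ) ≤ #(Σ n, L.BoundedFormula γ n) :=
    Cardinal.mk_le_of_injective (f := fun φ => (⟨0, φ⟩ : Σ n, L.BoundedFormula γ n))
      (sigma_mk_injective (i := 0))
  have h2 := Language.BoundedFormula.card_le (L := L) (α := γ)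
  rw [Cardinal.lift_id, Cardinal.lift_id] at h2
  exact lt_of_le_of_lt (h1.trans h2)
    (max_lt mon.aleph0_lt (Cardinal.add_lt_of_lt mon.aleph0_lt.le hγ mon.lang_lt))

/-- The image of an elementary substructure under an automorphism. -/
noncomputable def mapES (f : M ≃[L] M) (N : L.ElementarySubstructure M) :
    L.ElementarySubstructure M :=
  Language.Substructure.toElementarySubstructure (N.toSubstructure.map f.toHom) (by
    intro n φ x aW h
    choose y hyN hyf using fun i => Language.Substructure.mem_map.mp (x i).2
    have hfy : ∀ i, f (y i) = ↑(x i) := hyf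
    set y' : Fin n → ↥N := fun i => ⟨y i, hyN i⟩ with hy'
    have h1 : φ.Realize (default : Empty → M) (Fin.snoc (Subtype.val ∘ y') (f.symm aW)) := by
      have h0 := (Language.StrongHomClass.realize_boundedFormula (L := L) f.symm φ
        (v := (default : Empty → M)) (xs := Fin.snoc ((↑) ∘ x) aW)).mpr h
      rw [Unique.eq_default (⇑f.symm ∘ (default : Empty → M)), Fin.comp_snoc] at h0
      have he : ⇑f.symm ∘ ((↑) ∘ x) = Subtype.val ∘ y' := by
        funext i
        show f.symm ↑(x i) = y i
        rw [← hfy i, Language.Equiv.symm_apply_apply]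
      rwa [he] at h0
    have h2 : φ.ex.Realize (default : Empty → M) (Subtype.val ∘ y') :=
      Language.BoundedFormula.realize_ex.mpr ⟨f.symm aW, h1⟩
    have h3 : φ.ex.Realize (default : Empty → ↥N) y' := by
      have h4 := N.subtype.map_boundedFormula φ.ex (default : Empty → ↥N) y'
      rw [Unique.eq_default (⇑N.subtype ∘ (default : Empty → ↥N))] at h4
      exact h4.mp h2
    obtain ⟨b, hb⟩ := Language.BoundedFormula.realize_ex.mp h3
    have h5 : φ.Realize (default : Empty → M) (Fin.snoc (Subtype.val ∘ y') (↑b : M)) := by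
      have h6 := N.subtype.map_boundedFormula φ (default : Empty → ↥N) (Fin.snoc y' b)
      rw [Unique.eq_default (⇑N.subtype ∘ (default : Empty → ↥N)), Fin.comp_snoc] at h6
      exact h6.mpr hb
    refine ⟨⟨f ↑b, Language.Substructure.mem_map.mpr ⟨↑b, b.2, rfl⟩⟩, ?_⟩
    have h7 := (Language.StrongHomClass.realize_boundedFormula (L := L) f φ
      (v := (default : Empty → M)) (xs := Fin.snoc (Subtype.val ∘ y') (↑b : M))).mpr h5
    rw [Unique.eq_default (⇑f ∘ (default : Empty → M)), Fin.comp_snoc] at h7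
    have he : ⇑f ∘ (Subtype.val ∘ y') = (↑) ∘ x := by
      funext i
      exact hfy i
    rwa [he] at h7)

theorem mem_mapES {f : M ≃[L] M} {N : L.ElementarySubstructure M} {x : M} :
    x ∈ mapES L M f N ↔ ∃ y ∈ N, f y = x := by
  show x ∈ N.toSubstructure.map f.toHom ↔ _
  exact Language.Substructure.mem_map

theorem coe_mapES (f : M ≃[L] M) (N : L.ElementarySubstructure M) :
    ((mapES L M f N : Set M)) = ⇑f '' (N : Set M) := by
  ext x
  rw [SetLike.mem_coe, mem_mapES L M]
  exact Iff.rfl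

theorem card_mapES (f : M ≃[L] M) (N : L.ElementarySubstructure M) :
    #((mapES L M f N : Set M)) = #((N : Set M)) := by
  rw [coe_mapES L M]
  exact Cardinal.mk_image_eq (EquivLike.injective f)

end AuxProofs


theorem key_lemma (κbar : Cardinal.{u}) (mon : Monster L M κbar) {α : Type u} (hα : #α < κbar)
    (E : IER L M α) (g : α → M) (HS : Set (M ≃[L] M)) (S : Set (α → M))
    (hScard : #S < κbar) (hcover : ∀ σ ∈ HS, ∃ s ∈ S, E.rel (⇑σ ∘ g) s)
    (N : L.ElementarySubstructure M) (hNc : #((N : Set M)) < κbar)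
    (hNH : autES L M N ⊆ HS) (σ' : M ≃[L] M) (hσ' : σ' ∈ autES L M N) :
    E.rel g (⇑σ' ∘ g) := by
  classical
  rcases isEmpty_or_nonempty α with hα0 | hα1
  · have hgg : ⇑σ' ∘ g = g := funext fun x => (hα0.false x).elim
    rw [hgg]; exact E.equiv.refl g
  haveI : Nonempty M := ⟨g (Classical.arbitrary α)⟩
  have hℵ : ℵ₀ ≤ κbar := mon.aleph0_lt.le
  set V : ↥N → M := Subtype.val with hV
  have hν : #(↥N) < κbar := hNc
  set b : α → M := ⇑σ' ∘ g with hb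
  -- the coheir ultrafilter
  set Fam : Set (Set (α → ↥N)) :=
    {s | ∃ ψ : L.Formula (↥N ⊕ α), ψ.Realize (Sum.elim V g) ∧
      s = {n | ψ.Realize (Sum.elim V (V ∘ n))}} with hFam
  have hFIP : ∀ t ⊆ Fam, t.Finite → (⋂₀ t).Nonempty := by
    intro t hts htf
    have hsuf : t ⊆ Fam → ∃ ψ : L.Formula (↥N ⊕ α), ψ.Realize (Sum.elim V g) ∧
        {n | ψ.Realize (Sum.elim V (V ∘ n))} ⊆ ⋂₀ t := by
      refine Set.Finite.induction_on t htf ?_ ?_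
      · intro _
        exact ⟨⊤, Language.Formula.realize_top.mpr trivial, by simp⟩
      · intro s t₂ _ _ IH hsub
        obtain ⟨χ, hχr, rfl⟩ := hsub (Set.mem_insert _ _)
        obtain ⟨ψ, hψr, hψsub⟩ := IH (fun x hx => hsub (Set.mem_insert_of_mem _ hx))
        refine ⟨χ ⊓ ψ, Language.Formula.realize_inf.mpr ⟨hχr, hψr⟩, ?_⟩
        intro n hn
        have h2 := Language.Formula.realize_inf.mp hn
        rw [Set.sInter_insert]
        exact ⟨h2.1, hψsub h2.2⟩
    obtain ⟨ψ, hr, hsub⟩ := hsuf hts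
    obtain ⟨n, hn⟩ := exists_realize_sub L M N ψ g hr
    exact ⟨n, hsub hn⟩
  haveI hgen : (Filter.generate Fam).NeBot := Filter.generate_neBot_iff.mpr hFIP
  set U : Ultrafilter (α → ↥N) := Ultrafilter.of (Filter.generate Fam) with hUdef
  have hU : ∀ ψ : L.Formula (↥N ⊕ α), ψ.Realize (Sum.elim V g) →
      {n | ψ.Realize (Sum.elim V (V ∘ n))} ∈ U :=
    fun ψ h => (Ultrafilter.of_le (Filter.generate Fam))
      (Filter.mem_generate_of_mem ⟨ψ, h, rfl⟩)
  have hUiff : ∀ ψ : L.Formula (↥N ⊕ α),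
      ψ.Realize (Sum.elim V g) ↔ {n | ψ.Realize (Sum.elim V (V ∘ n))} ∈ U := by
    intro ψ
    refine ⟨hU ψ, fun hmem => ?_⟩
    by_contra hnr
    have h1 : {n | ψ.not.Realize (Sum.elim V (V ∘ n))} ∈ U :=
      hU ψ.not (Language.Formula.realize_not.mpr hnr)
    have h2 : {n | ψ.not.Realize (Sum.elim V (V ∘ n))} =
        {n | ψ.Realize (Sum.elim V (V ∘ n))}ᶜ :=
      Set.ext fun n => by simp [Language.Formula.realize_not]
    rw [h2] at h1
    exact (Ultrafilter.compl_mem_iff_notMem.mp h1) hmem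
  -- the index well-order
  set lam : Cardinal.{u} := Order.succ (#S) with hlam
  have hlamκ : lam < κbar :=
    lt_of_le_of_lt (Order.succ_le_of_lt (Cardinal.cantor _)) (mon.strongLimit _ hScard)
  set ι : Type u := lam.ord.ToType with hιdef
  have hιcard : #ι = lam := Cardinal.mk_ord_toType lam
  haveI hιne : Nonempty ι := by
    refine Cardinal.mk_ne_zero_iff.mp ?_
    rw [hιcard]
    exact Cardinal.succ_ne_zero _
  have hIdx : #((↥N ⊕ (α ⊕ α)) ⊕ (ι × α)) < κbar := by
    have h1 : #(↥N ⊕ (α ⊕ α)) < κbar := by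
      simp only [Cardinal.mk_sum, Cardinal.lift_id]
      exact Cardinal.add_lt_of_lt hℵ hν (Cardinal.add_lt_of_lt hℵ hα hα)
    have h2 : #(ι × α) < κbar := by
      simp only [Cardinal.mk_prod, Cardinal.lift_id]
      exact Cardinal.mul_lt_of_lt hℵ (hιcard ▸ hlamκ) hα
    simp only [Cardinal.mk_sum, Cardinal.lift_id]
    exact Cardinal.add_lt_of_lt hℵ h1 h2
  set Par : (ι → α → M) → ((↥N ⊕ (α ⊕ α)) ⊕ (ι × α)) → M :=
    fun d => Sum.elim (Sum.elim V (Sum.elim g b)) (fun p => d p.1 p.2) with hPar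
  have sat : ∀ e : ((↥N ⊕ (α ⊕ α)) ⊕ (ι × α)) → M, ∃ cc : α → M,
      ∀ θ : L.Formula (((↥N ⊕ (α ⊕ α)) ⊕ (ι × α)) ⊕ α),
        {n | θ.Realize (Sum.elim e (V ∘ n))} ∈ U → θ.Realize (Sum.elim e cc) := by
    intro e
    have hfin : ∀ s : Finset (L.Formula (((↥N ⊕ (α ⊕ α)) ⊕ (ι × α)) ⊕ α)),
        ↑s ⊆ {θ : L.Formula (((↥N ⊕ (α ⊕ α)) ⊕ (ι × α)) ⊕ α) |
            {n | θ.Realize (Sum.elim e (V ∘ n))} ∈ U} →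
        ∃ bb : α → M, ∀ φ ∈ s, φ.Realize (Sum.elim e bb) := by
      intro s hs
      have hmem : (⋂ θ ∈ s, {n | θ.Realize (Sum.elim e (V ∘ n))}) ∈ U :=
        (Filter.biInter_finset_mem s).mpr (fun θ hθ => hs hθ)
      obtain ⟨n, hn⟩ := Ultrafilter.nonempty_of_mem hmem
      exact ⟨V ∘ n, fun θ hθ => Set.mem_iInter₂.mp hn θ hθ⟩
    obtain ⟨cc, hcc⟩ := mon.saturated _ α hIdx hα e _ hfin
    exact ⟨cc, hcc⟩
  set c : ι → α → M := (IsWellFounded.wf (r := ((· < ·) : ι → ι → Prop))).fix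
      (fun i rec => Classical.choose
        (sat (Par (fun j x => if h : j < i then rec j h x else g x)))) with hcdef
  have hci : ∀ i : ι, c i = Classical.choose
      (sat (Par (fun j x => if _ : j < i then c j x else g x))) := by
    intro i
    conv_lhs => rw [hcdef]
    rw [WellFounded.fix_eq]
  set Pc : ι → ((↥N ⊕ (α ⊕ α)) ⊕ (ι × α)) → M :=
    fun i => Par (fun j x => if _ : j < i then c j x else g x) with hPc
  have cspec : ∀ (i : ι) (θ : L.Formula (((↥N ⊕ (α ⊕ α)) ⊕ (ι × α)) ⊕ α)),
      {n | θ.Realize (Sum.elim (Pc i) (V ∘ n))} ∈ U →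
      θ.Realize (Sum.elim (Pc i) (c i)) := by
    intro i θ hθ
    rw [hci i]
    exact Classical.choose_spec (sat (Pc i)) θ hθ
  have char : ∀ (i : ι) (θ : L.Formula (((↥N ⊕ (α ⊕ α)) ⊕ (ι × α)) ⊕ α)),
      θ.Realize (Sum.elim (Pc i) (c i)) ↔ {n | θ.Realize (Sum.elim (Pc i) (V ∘ n))} ∈ U := by
    intro i θ
    refine ⟨fun h => ?_, cspec i θ⟩
    by_contra hmem
    have h1 : {n | θ.not.Realize (Sum.elim (Pc i) (V ∘ n))} ∈ U := by
      have h2 : {n | θ.not.Realize (Sum.elim (Pc i) (V ∘ n))} =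
          {n | θ.Realize (Sum.elim (Pc i) (V ∘ n))}ᶜ :=
        Set.ext fun n => by simp [Language.Formula.realize_not]
      rw [h2]
      exact Ultrafilter.compl_mem_iff_notMem.mpr hmem
    exact (Language.Formula.realize_not.mp (cspec i θ.not h1)) h
  have addr : ∀ (i : ι) {γ : Type u} (m : γ → ((↥N ⊕ (α ⊕ α)) ⊕ (ι × α))) (w : γ → M),
      Pc i ∘ m = w → ∀ θ : L.Formula (γ ⊕ α),
      (θ.Realize (Sum.elim w (c i)) ↔ {n | θ.Realize (Sum.elim w (V ∘ n))} ∈ U) := by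
    intro i γ m w hw θ
    have hval : ∀ x : α → M, (Sum.elim (Pc i) x) ∘ (Sum.map m id) = Sum.elim w x := by
      intro x; funext z; rcases z with z | z
      · exact congrFun hw z
      · rfl
    have h1 : ∀ x : α → M,
        (θ.relabel (Sum.map m id)).Realize (Sum.elim (Pc i) x) ↔ θ.Realize (Sum.elim w x) := by
      intro x; rw [Language.Formula.realize_relabel, hval]
    rw [← h1 (c i), char i,
      show {n | θ.Realize (Sum.elim w (V ∘ n))} =
        {n | (θ.relabel (Sum.map m id)).Realize (Sum.elim (Pc i) (V ∘ n))} from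
        Set.ext fun n => (h1 (V ∘ n)).symm]
  have hBeq : ∀ {γ : Type u} (w w' : γ → M),
      (∀ χ : L.Formula (↥N ⊕ γ), χ.Realize (Sum.elim V w) ↔ χ.Realize (Sum.elim V w')) →
      ∀ θ : L.Formula (γ ⊕ α),
        {n | θ.Realize (Sum.elim w (V ∘ n))} = {n | θ.Realize (Sum.elim w' (V ∘ n))} := by
    intro γ w w' hst θ
    ext n
    have h := hst (θ.relabel (Sum.elim (fun z => Sum.inr z) (fun x => Sum.inl (n x))))
    rw [Language.Formula.realize_relabel, Language.Formula.realize_relabel] at h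
    have e1 : (Sum.elim V w) ∘ (Sum.elim (fun z => Sum.inr z) fun x => Sum.inl (n x)) =
        Sum.elim w (V ∘ n) := by funext z; rcases z with z | z <;> rfl
    have e2 : (Sum.elim V w') ∘ (Sum.elim (fun z => Sum.inr z) fun x => Sum.inl (n x)) =
        Sum.elim w' (V ∘ n) := by funext z; rcases z with z | z <;> rfl
    rw [e1, e2] at h
    exact h
  have pair : ∀ {γ : Type u} (i j : ι) (m m' : γ → ((↥N ⊕ (α ⊕ α)) ⊕ (ι × α))) (w w' : γ → M),
      Pc i ∘ m = w → Pc j ∘ m' = w' →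
      (∀ χ : L.Formula (↥N ⊕ γ), χ.Realize (Sum.elim V w) ↔ χ.Realize (Sum.elim V w')) →
      SameType L M (Sum.elim w (c i)) (Sum.elim w' (c j)) := by
    intro γ i j m m' w w' hm hm' hst θ
    rw [addr i m w hm θ, addr j m' w' hm' θ, hBeq w w' hst θ]
  have haddrV : ∀ i : ι, Pc i ∘ (fun z : ↥N => Sum.inl (Sum.inl z)) = V := fun _ => rfl
  have haddrg : ∀ i : ι, Pc i ∘ (fun x : α => Sum.inl (Sum.inr (Sum.inl x))) = g := fun _ => rfl
  have haddrb : ∀ i : ι, Pc i ∘ (fun x : α => Sum.inl (Sum.inr (Sum.inr x))) = b := fun _ => rfl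
  have haddrc : ∀ i j : ι, i < j → Pc j ∘ (fun x : α => Sum.inr (i, x)) = c i := by
    intro i j hij
    funext x
    show (if _ : i < j then c i x else g x) = c i x
    rw [dif_pos hij]
  have F1 : ∀ (i : ι) (χ : L.Formula (↥N ⊕ α)),
      χ.Realize (Sum.elim V g) ↔ χ.Realize (Sum.elim V (c i)) := by
    intro i χ
    rw [hUiff χ, addr i _ V (haddrV i) χ]
  have hab : ∀ χ : L.Formula (↥N ⊕ α),
      χ.Realize (Sum.elim V g) ↔ χ.Realize (Sum.elim V b) := by
    intro χ
    have h := Language.StrongHomClass.realize_formula σ' (φ := χ) (v := Sum.elim V g)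
    have e : ⇑σ' ∘ Sum.elim V g = Sum.elim V b := by
      funext z
      rcases z with m | x
      · exact hσ' m.1 m.2
      · rfl
    rw [e] at h
    exact h.symm
  set i0 : ι := Classical.arbitrary ι with hi0
  by_cases hE : E.rel g (c i0)
  · have hP1 : SameType L M (Sum.elim g (c i0)) (Sum.elim b (c i0)) :=
      pair i0 i0 _ _ g b (haddrg i0) (haddrb i0) hab
    have hbc : E.rel b (c i0) := (E.invariant g (c i0) b (c i0) hP1).mp hE
    exact E.equiv.trans hE (E.equiv.symm hbc)
  · exfalso
    have hP2 : ∀ i j : ι, i < j → SameType L M (Sum.elim (c i) (c j)) (Sum.elim g (c i0)) := by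
      intro i j hij
      exact pair j i0 _ _ (c i) g (haddrc i j hij) (haddrg i0) (fun χ => (F1 i χ).symm)
    have hnotrel : ∀ i j : ι, i ≠ j → ¬ E.rel (c i) (c j) := by
      intro i j hne h
      rcases lt_or_gt_of_ne hne with hlt | hgt
      · exact hE ((E.invariant _ _ _ _ (hP2 i j hlt)).mp h)
      · exact hE ((E.invariant _ _ _ _ (hP2 j i hgt)).mp (E.equiv.symm h))
    have hνα : #(↥N ⊕ α) < κbar := by
      simp only [Cardinal.mk_sum, Cardinal.lift_id]
      exact Cardinal.add_lt_of_lt hℵ hν hα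
    have hτ : ∀ i : ι, ∃ τ : M ≃[L] M, ∀ z, τ (Sum.elim V g z) = Sum.elim V (c i) z := by
      intro i
      exact mon.homog (↥N ⊕ α) (Sum.elim V g) (Sum.elim V (c i)) hνα (fun χ => F1 i χ)
    choose τ hτs using hτ
    have hτH : ∀ i, τ i ∈ HS := by
      intro i
      apply hNH
      intro x hx
      exact hτs i (Sum.inl ⟨x, hx⟩)
    have hτg : ∀ i, ⇑(τ i) ∘ g = c i := fun i => funext fun x => hτs i (Sum.inr x)
    choose sfun hsS hsE using fun i => hcover (τ i) (hτH i)
    have hrel : ∀ i, E.rel (c i) (sfun i) := fun i => (hτg i) ▸ hsE i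
    have hinj : Function.Injective (fun i => (⟨sfun i, hsS i⟩ : S)) := by
      intro i j hij
      by_contra hne
      have hss : sfun i = sfun j := congrArg Subtype.val hij
      have h2 : E.rel (c j) (sfun i) := by rw [hss]; exact hrel j
      exact hnotrel i j hne (E.equiv.trans (hrel i) (E.equiv.symm h2))
    have hle2 : #ι ≤ #S := Cardinal.mk_le_of_injective hinj
    rw [hιcard] at hle2
    exact absurd hle2 (not_le.mpr (Order.lt_succ (#S)))


/-- For co-small subgroups `G, H ≤ Aut(𝕄)` and ultraimaginaries
`⟨G⟩ = g_E`, `⟨H⟩ = h_F` with `Aut(𝕄/g_E) = G` and `Aut(𝕄/h_F) = H`, one has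
`⟨G⟩ ∈ bddᵘ(⟨H⟩)` if and only if `G ⊇ H_f`. -/
theorem statement_6 (L : FirstOrder.Language.{u, u}) (M : Type u) [L.Structure M]
    (κbar : Cardinal.{u}) (_mon : Monster L M κbar)
    (G H : Subgroup (M ≃[L] M))
    (hG : ∃ N : L.ElementarySubstructure M, #(N : Set M) < κbar ∧
      autES L M N ⊆ (G : Set (M ≃[L] M)))
    (hH : ∃ N : L.ElementarySubstructure M, #(N : Set M) < κbar ∧
      autES L M N ⊆ (H : Set (M ≃[L] M)))
    {α β : Type u} (hα : #α < κbar) (hβ : #β < κbar)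
    (E : IER L M α) (g : α → M) (F : IER L M β) (h : β → M)
    (hEg : autU L M E g = (G : Set (M ≃[L] M)))
    (hFh : autU L M F h = (H : Set (M ≃[L] M))) :
    BddU L M κbar (H : Set (M ≃[L] M)) E g ↔
      autfGen L M κbar (H : Set (M ≃[L] M)) ≤ G := by
  classical
  constructor
  · rintro ⟨S, hScard, hcover⟩
    refine (Subgroup.closure_le G).mpr ?_
    rintro σ'' ⟨N', hN'c, hN'H, hσ''⟩
    rw [← hEg]
    exact key_lemma L M κbar _mon hα E g (↑H) S hScard hcover N' hN'c hN'H σ'' hσ''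
  · intro hle
    obtain ⟨N, hNc, hNH⟩ := hH
    rcases isEmpty_or_nonempty α with hα0 | hα1
    · refine ⟨{g}, ?_, fun σ _ => ⟨g, Set.mem_singleton g, ?_⟩⟩
      · rw [Cardinal.mk_singleton]
        exact lt_trans Cardinal.one_lt_aleph0 _mon.aleph0_lt
      · have hgg : ⇑σ ∘ g = g := funext fun x => (hα0.false x).elim
        rw [hgg]; exact E.equiv.refl g
    haveI : Nonempty M := ⟨g (Classical.arbitrary α)⟩
    have hνα : #(↥N ⊕ α) < κbar := by
      simp only [Cardinal.mk_sum, Cardinal.lift_id]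
      exact Cardinal.add_lt_of_lt _mon.aleph0_lt.le hNc hα
    set Tp : (M ≃[L] M) → Set (L.Formula (↥N ⊕ α)) :=
      fun σ => {ψ | ψ.Realize (Sum.elim Subtype.val (⇑σ ∘ g))} with hTp
    set R : Set (Set (L.Formula (↥N ⊕ α))) :=
      {t | ∃ σ, σ ∈ (H : Set (M ≃[L] M)) ∧ Tp σ = t} with hR
    have hchoice : ∀ t : R, ∃ σ, σ ∈ (H : Set (M ≃[L] M)) ∧ Tp σ = (t : Set _) :=
      fun t => t.2
    choose pick hpickH hpickT using hchoice
    refine ⟨Set.range (fun t => ⇑(pick t) ∘ g), ?_, ?_⟩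
    · refine lt_of_le_of_lt (Cardinal.mk_range_le) ?_
      refine lt_of_le_of_lt (Cardinal.mk_set_le R) ?_
      rw [Cardinal.mk_set]
      exact _mon.strongLimit _ (formula_card_lt L M _mon hνα)
    · intro σ hσ
      have htR : Tp σ ∈ R := ⟨σ, hσ, rfl⟩
      set τ : M ≃[L] M := pick ⟨Tp σ, htR⟩ with hτdef
      refine ⟨⇑τ ∘ g, Set.mem_range_self _, ?_⟩
      have hτH : τ ∈ (H : Set (M ≃[L] M)) := hpickH _
      have hTeq : Tp τ = Tp σ := hpickT _
      have hst : SameType L M (Sum.elim (Subtype.val : ↥N → M) (⇑σ ∘ g))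
          (Sum.elim Subtype.val (⇑τ ∘ g)) := by
        intro ψ
        constructor
        · intro hh
          have h1 : ψ ∈ Tp σ := hh
          rw [← hTeq] at h1
          exact h1
        · intro hh
          have h1 : ψ ∈ Tp τ := hh
          rw [hTeq] at h1
          exact h1
      obtain ⟨ρ, hρ⟩ := _mon.homog (↥N ⊕ α) _ _ hνα hst
      have hρN : ρ ∈ autES L M N := fun x hx => hρ (Sum.inl ⟨x, hx⟩)
      have hρg : ∀ x, ρ (σ (g x)) = τ (g x) := fun x => hρ (Sum.inr x)
      have hσH : σ ∈ H := hσ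
      set N' : L.ElementarySubstructure M := mapES L M σ⁻¹ N with hN'def
      have hπfix : (σ⁻¹ * ρ * σ) ∈ autES L M N' := by
        intro x hx
        obtain ⟨y, hyN, rfl⟩ := (mem_mapES L M).mp hx
        show σ.symm (ρ (σ (σ.symm y))) = σ.symm y
        rw [σ.apply_symm_apply, hρN y hyN]
      have hN'H : autES L M N' ⊆ (H : Set (M ≃[L] M)) := by
        intro π hπ
        have hmem : (σ * π * σ⁻¹) ∈ autES L M N := by
          intro x hx
          have hx' : ((σ⁻¹ : M ≃[L] M) x) ∈ mapES L M σ⁻¹ N :=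
            (mem_mapES L M).mpr ⟨x, hx, rfl⟩
          have h1 : π ((σ⁻¹ : M ≃[L] M) x) = (σ⁻¹ : M ≃[L] M) x := hπ _ hx'
          show σ (π (σ.symm x)) = x
          rw [show (σ.symm x : M) = ((σ⁻¹ : M ≃[L] M) x) from rfl, h1]
          exact σ.apply_symm_apply x
        have hH1 : σ * π * σ⁻¹ ∈ H := SetLike.mem_coe.mp (hNH hmem)
        have heq : π = σ⁻¹ * (σ * π * σ⁻¹) * σ := by group
        rw [heq]
        exact SetLike.mem_coe.mpr (mul_mem (mul_mem (inv_mem hσH) hH1) hσH)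
      have hN'c : #((N' : Set M)) < κbar := by
        rw [hN'def, card_mapES L M]
        exact hNc
      have hπgen : (σ⁻¹ * ρ * σ) ∈ autfGen L M κbar (H : Set (M ≃[L] M)) :=
        Subgroup.subset_closure ⟨N', hN'c, hN'H, hπfix⟩
      have hπrel : E.rel g (⇑(σ⁻¹ * ρ * σ) ∘ g) := by
        have hmem : (σ⁻¹ * ρ * σ) ∈ autU L M E g := by
          rw [hEg]
          exact SetLike.mem_coe.mpr (hle hπgen)
        exact hmem
      have hst2 : SameType L M (Sum.elim g (⇑(σ⁻¹ * ρ * σ) ∘ g))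
          (Sum.elim (⇑σ ∘ g) (⇑σ ∘ (⇑(σ⁻¹ * ρ * σ) ∘ g))) := by
        have h := sameType_comp_equiv L M σ (Sum.elim g (⇑(σ⁻¹ * ρ * σ) ∘ g))
        rwa [Sum.comp_elim] at h
      have hrel2 : E.rel (⇑σ ∘ g) (⇑σ ∘ (⇑(σ⁻¹ * ρ * σ) ∘ g)) :=
        (E.invariant _ _ _ _ hst2).mp hπrel
      have hfin : (⇑σ ∘ (⇑(σ⁻¹ * ρ * σ) ∘ g)) = ⇑τ ∘ g := by
        funext x
        show σ (σ.symm (ρ (σ (g x)))) = τ (g x)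
        rw [σ.apply_symm_apply]
        exact hρg x
      rw [hfin] at hrel2
      exact hrel2

end BddUltra
end
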